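/- arXiv:1809.06633 — 6 statements merged into one kernel-verified Lean document; each statement's English description precedes it below -/
import Mathlib

section
/- Let D_n = n! ∑_{k=0}^n (−1)^k/k! be the number of derangements and A_n = n! ∑_{k=0}^n 1/k! the number of arrangements of an n-element set. If a function P satisfies P(x) ~ ∑_{n=1}^∞ (n−1)!/(log x)^n (x → ∞), then P(e·x) ~ ∑_{n=1}^∞ D_{n−1}/(log x)^n (x → ∞) and P(x/e) ~ ∑_{n=1}^∞ A_{n−1}/(log x)^n (x → ∞). -/
open Real Filter Asymptotics

/-- The number of derangements of an `n`-element set, `D_n = n! ∑_{k=0}^n (-1)^k/k!`. -/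
noncomputable def derangementsReal (n : ℕ) : ℝ :=
  (Nat.factorial n : ℝ) * ∑ k ∈ Finset.range (n + 1), (-1 : ℝ) ^ k / (Nat.factorial k : ℝ)

/-- The number of arrangements of an `n`-element set, `A_n = n! ∑_{k=0}^n 1/k!`. -/
noncomputable def arrangementsReal (n : ℕ) : ℝ :=
  (Nat.factorial n : ℝ) * ∑ k ∈ Finset.range (n + 1), 1 / (Nat.factorial k : ℝ)

open Finset


lemma sub_one_mul_S (k m : ℕ) (z : ℝ) :
    (1-z) * ∑ i ∈ range (m+1), ((k+1+i).choose i : ℝ) * z^i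
    = ∑ i ∈ range (m+1), ((k+i).choose i : ℝ) * z^i - ((k+1+m).choose m : ℝ) * z^(m+1) := by
  induction m with
  | zero => simp
  | succ m ih =>
    rw [Finset.sum_range_succ, Finset.sum_range_succ (f := fun i => ((k+i).choose i : ℝ) * z^i)]
    have hp : ((k+1+(m+1)).choose (m+1) : ℝ) = ((k+1+m).choose m : ℝ) + ((k+1+m).choose (m+1) : ℝ) := by
      have : k+1+(m+1) = (k+1+m)+1 := by omega
      rw [this, Nat.choose_succ_succ']
      push_cast; ring
    have he : k+(m+1) = k+1+m := by omega
    rw [he, hp]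
    linear_combination ih

lemma key_ident (k m : ℕ) (z : ℝ) :
    (1-z)^(k+1) * ∑ i ∈ range (m+1), ((k+i).choose i : ℝ) * z^i
    + z^(m+1) * ∑ j ∈ range (k+1), ((j+m).choose m : ℝ) * (1-z)^j = 1 := by
  induction k with
  | zero =>
    simp only [Nat.choose_self, Nat.zero_add, Nat.choose_zero_right, zero_add, pow_one,
      Finset.sum_range_one, Nat.cast_one, one_mul, pow_zero, mul_one]
    have h := geom_sum_mul z (m+1)
    linear_combination -h
  | succ k ih =>
    rw [Finset.sum_range_succ (f := fun j => ((j+m).choose m : ℝ) * (1-z)^j)]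
    have hS := sub_one_mul_S k m z
    linear_combination ih + (1-z)^(k+1) * hS

lemma per_k (a L : ℝ) (hL : L ≠ 0) (hLa : L + a ≠ 0) (k m : ℕ) :
    (k.factorial : ℝ)/(L+a)^(k+1)
    = (∑ i ∈ range (m+1), (k.factorial : ℝ) * ((k+i).choose i : ℝ) * (-a)^i / L^(k+1+i))
      + (k.factorial : ℝ) * (-a)^(m+1)
        * (∑ j ∈ range (k+1), ((j+m).choose m : ℝ) * ((L+a)/L)^j) / (L^(m+1) * (L+a)^(k+1)) := by
  have h := key_ident k m (-a/L)
  have hz : (1 : ℝ) - (-a/L) = (L+a)/L := by field_simp; ring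
  rw [hz] at h
  set s := ∑ i ∈ range (m+1), ((k+i).choose i : ℝ) * (-a/L)^i with hs
  set t := ∑ j ∈ range (k+1), ((j+m).choose m : ℝ) * ((L+a)/L)^j with ht
  have hsum : (∑ i ∈ range (m+1), (k.factorial : ℝ) * ((k+i).choose i : ℝ) * (-a)^i / L^(k+1+i))
      = (k.factorial : ℝ) * s / L^(k+1) := by
    rw [hs, Finset.mul_sum, Finset.sum_div]
    refine Finset.sum_congr rfl fun i _ => ?_
    rw [div_pow, pow_add]
    field_simp
  rw [hsum]
  field_simp at h ⊢
  have hLk : L^(k+1) ≠ 0 := pow_ne_zero _ hL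
  have hLm : L^(m+1) ≠ 0 := pow_ne_zero _ hL
  have e1 : ((L+a)/L)^(k+1) * L^(k+1) = (L+a)^(k+1) := by rw [div_pow, div_mul_cancel₀ _ hLk]
  have e2 : (-(a/L))^(m+1) * L^(m+1) = (-a)^(m+1) := by rw [← neg_div, div_pow, div_mul_cancel₀ _ hLm]
  linear_combination (-(L^(k+1) * L^(m+1))) * h + s * L^(m+1) * e1 + t * L^(k+1) * e2

lemma sum_swap_tri (n : ℕ) (f : ℕ → ℕ → ℝ) :
    ∑ k ∈ range n, ∑ i ∈ range (n - k), f k i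
    = ∑ j ∈ range n, ∑ t ∈ range (j+1), f (j - t) t := by
  rw [Finset.sum_sigma', Finset.sum_sigma']
  refine Finset.sum_nbij' (fun p => ⟨p.1 + p.2, p.2⟩) (fun p => ⟨p.1 - p.2, p.2⟩) ?_ ?_ ?_ ?_ ?_
  · rintro ⟨k, i⟩ hp
    simp only [Finset.mem_sigma, Finset.mem_range] at *
    omega
  · rintro ⟨j, t⟩ hp
    simp only [Finset.mem_sigma, Finset.mem_range] at *
    omega
  · rintro ⟨k, i⟩ hp
    simp only [Finset.mem_sigma, Finset.mem_range] at hp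
    simp only [Nat.add_sub_cancel]
  · rintro ⟨j, t⟩ hp
    simp only [Finset.mem_sigma, Finset.mem_range] at hp
    have : j - t + t = j := by omega
    simp [this]
  · rintro ⟨k, i⟩ hp
    simp only [Nat.add_sub_cancel]

lemma alg_ident (a L : ℝ) (hL : L ≠ 0) (hLa : L + a ≠ 0) (n : ℕ) :
    ∑ k ∈ range n, (k.factorial : ℝ)/(L+a)^(k+1)
      - ∑ j ∈ range n, ((j.factorial : ℝ) * ∑ t ∈ range (j+1), (-a)^t/(t.factorial : ℝ))/L^(j+1)
    = ∑ k ∈ range n, (k.factorial : ℝ) * (-a)^(n-k)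
        * (∑ j ∈ range (k+1), ((j+(n-1-k)).choose (n-1-k) : ℝ) * ((L+a)/L)^j)
        / (L^(n-k) * (L+a)^(k+1)) := by
  have h1 : ∑ k ∈ range n, (k.factorial : ℝ)/(L+a)^(k+1)
      = ∑ k ∈ range n, ((∑ i ∈ range (n-k), (k.factorial : ℝ) * ((k+i).choose i : ℝ) * (-a)^i / L^(k+1+i))
        + (k.factorial : ℝ) * (-a)^(n-k)
          * (∑ j ∈ range (k+1), ((j+(n-1-k)).choose (n-1-k) : ℝ) * ((L+a)/L)^j)
          / (L^(n-k) * (L+a)^(k+1))) := by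
    refine Finset.sum_congr rfl fun k hk => ?_
    have hk' : k < n := Finset.mem_range.mp hk
    have hm : n - 1 - k + 1 = n - k := by omega
    have := per_k a L hL hLa k (n-1-k)
    rw [hm] at this
    exact this
  rw [h1, Finset.sum_add_distrib]
  have h2 : ∑ k ∈ range n, ∑ i ∈ range (n-k), (k.factorial : ℝ) * ((k+i).choose i : ℝ) * (-a)^i / L^(k+1+i)
      = ∑ j ∈ range n, ((j.factorial : ℝ) * ∑ t ∈ range (j+1), (-a)^t/(t.factorial : ℝ))/L^(j+1) := by
    rw [sum_swap_tri n (fun k i => (k.factorial : ℝ) * ((k+i).choose i : ℝ) * (-a)^i / L^(k+1+i))]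
    refine Finset.sum_congr rfl fun j hj => ?_
    have h3 : ∀ t ∈ range (j+1),
        ((j-t).factorial : ℝ) * (((j-t)+t).choose t : ℝ) * (-a)^t / L^((j-t)+1+t)
        = (j.factorial : ℝ) * ((-a)^t/(t.factorial : ℝ)) / L^(j+1) := by
      intro t ht
      have htj : t ≤ j := by simpa [Nat.lt_succ_iff] using Finset.mem_range.mp ht
      have e1 : j - t + t = j := by omega
      have e2 : j - t + 1 + t = j + 1 := by omega
      rw [e1, e2]
      have hfact : ((j.choose t) * t.factorial * (j-t).factorial : ℕ) = j.factorial :=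
        Nat.choose_mul_factorial_mul_factorial htj
      have hfr : ((j-t).factorial : ℝ) * (j.choose t : ℝ) = (j.factorial : ℝ) / (t.factorial : ℝ) := by
        have := congrArg (fun x : ℕ => (x : ℝ)) hfact
        push_cast at this
        field_simp
        linear_combination this
      rw [hfr]
      ring
    rw [Finset.sum_congr rfl h3, ← Finset.sum_div, ← Finset.mul_sum]
  rw [h2]
  ring

lemma log_ratio_tendsto (a : ℝ) :
    Tendsto (fun x : ℝ => (Real.log x + a)/Real.log x) atTop (nhds 1) := by
  have h0 : Tendsto (fun x : ℝ => a / Real.log x) atTop (nhds 0) :=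
    Tendsto.div_atTop tendsto_const_nhds Real.tendsto_log_atTop
  have h1 : Tendsto (fun x : ℝ => 1 + a / Real.log x) atTop (nhds 1) := by
    simpa using tendsto_const_nhds.add h0
  apply h1.congr'
  filter_upwards [Real.tendsto_log_atTop.eventually_ge_atTop 1] with x hx
  have hL : Real.log x ≠ 0 := by linarith
  field_simp

lemma rem_o (a : ℝ) (n k : ℕ) (hk : k < n) :
    (fun x : ℝ => (k.factorial : ℝ) * (-a)^(n-k)
      * (∑ j ∈ range (k+1), ((j+(n-1-k)).choose (n-1-k) : ℝ) * ((Real.log x + a)/Real.log x)^j)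
      / ((Real.log x)^(n-k) * (Real.log x + a)^(k+1)))
    =o[atTop] (fun x : ℝ => 1/(Real.log x)^n) := by
  have hev : ∀ᶠ x : ℝ in atTop, |a| + 1 ≤ Real.log x :=
    Real.tendsto_log_atTop.eventually_ge_atTop _
  rw [isLittleO_iff_tendsto']
  swap
  · filter_upwards [hev] with x hx h0
    exfalso
    have h1 : (1:ℝ) ≤ Real.log x := le_trans (by linarith [abs_nonneg a]) hx
    have : (Real.log x)^n ≠ 0 := by positivity
    simp [this] at h0
  · have key : Tendsto (fun x : ℝ => ((k.factorial : ℝ) * (-a)^(n-k)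
        * (∑ j ∈ range (k+1), ((j+(n-1-k)).choose (n-1-k) : ℝ) * ((Real.log x + a)/Real.log x)^j))
        * ((Real.log x + a)/Real.log x)⁻¹^(k+1) * (Real.log x)⁻¹) atTop (nhds 0) := by
      have hT : Tendsto (fun x : ℝ => ∑ j ∈ range (k+1),
          ((j+(n-1-k)).choose (n-1-k) : ℝ) * ((Real.log x + a)/Real.log x)^j) atTop
          (nhds (∑ j ∈ range (k+1), ((j+(n-1-k)).choose (n-1-k) : ℝ) * 1^j)) :=
        tendsto_finset_sum _ fun j _ => tendsto_const_nhds.mul ((log_ratio_tendsto a).pow j)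
      have hq : Tendsto (fun x : ℝ => ((Real.log x + a)/Real.log x)⁻¹^(k+1)) atTop
          (nhds (1⁻¹^(k+1))) := ((log_ratio_tendsto a).inv₀ (by norm_num)).pow (k+1)
      have hinv : Tendsto (fun x : ℝ => (Real.log x)⁻¹) atTop (nhds 0) :=
        Real.tendsto_log_atTop.inv_tendsto_atTop
      simpa using ((tendsto_const_nhds.mul hT).mul hq).mul hinv
    apply key.congr'
    filter_upwards [hev] with x hx
    set L := Real.log x with hLdef
    have h1 : (1:ℝ) ≤ L := le_trans (by linarith [abs_nonneg a]) hx
    have hL : L ≠ 0 := by linarith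
    have hLa : L + a ≠ 0 := by
      have := abs_le.mp (le_refl |a|)
      have : -|a| ≤ a := neg_abs_le a
      nlinarith
    have hpow : L^n = L^(n-k) * L^k := by
      rw [← pow_add]; congr 1; omega
    have hLa' : (L+a)^(k+1) ≠ 0 := pow_ne_zero _ hLa
    field_simp
    rw [hpow]
    rw [div_pow]
    field_simp
    ring

lemma main_expansion (P : ℝ → ℝ)
    (hP : ∀ n : ℕ, 1 ≤ n →
      (fun x : ℝ => P x - ∑ k ∈ Finset.Icc 1 n, (Nat.factorial (k - 1) : ℝ) / (Real.log x) ^ k)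
        =o[atTop] (fun x : ℝ => 1 / (Real.log x) ^ n))
    (a : ℝ) (n : ℕ) (hn : 1 ≤ n) :
    (fun x : ℝ => P (Real.exp a * x)
      - ∑ j ∈ range n, ((j.factorial : ℝ) * ∑ t ∈ range (j+1), (-a)^t/(t.factorial : ℝ))
          / (Real.log x)^(j+1))
    =o[atTop] (fun x : ℝ => 1/(Real.log x)^n) := by
  have hev : ∀ᶠ x : ℝ in atTop, |a| + 1 ≤ Real.log x ∧ 1 ≤ x :=
    (Real.tendsto_log_atTop.eventually_ge_atTop _).and (eventually_ge_atTop 1)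
  have hIcc : ∀ g : ℕ → ℝ, ∑ k ∈ Finset.Icc 1 n, g k = ∑ k ∈ range n, g (k+1) := by
    intro g
    rw [← Finset.Ico_add_one_right_eq_Icc, Finset.sum_Ico_eq_sum_range]
    simp [add_comm]
  have hbig : (fun x : ℝ => 1/(Real.log x + a)^n) =O[atTop] (fun x : ℝ => 1/(Real.log x)^n) := by
    apply IsBigO.of_bound ((1+|a|)^n)
    filter_upwards [hev] with x hx
    set L := Real.log x
    have h1 : (1:ℝ) ≤ L := le_trans (by linarith [abs_nonneg a]) hx.1
    have h2 : (1:ℝ) ≤ L + a := by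
      have := neg_abs_le a; linarith [hx.1]
    have h3 : L ≤ (1+|a|)*(L+a) := by
      have := neg_abs_le a; have := abs_nonneg a; nlinarith
    have h4 : L^n ≤ ((1+|a|)*(L+a))^n := pow_le_pow_left₀ (by linarith) h3 n
    have h2' : (0:ℝ) < L + a := lt_of_lt_of_le one_pos h2
    have h1' : (0:ℝ) < L := lt_of_lt_of_le one_pos h1
    have e1 : ‖1/(L+a)^n‖ = 1/(L+a)^n := by
      rw [Real.norm_eq_abs, abs_of_nonneg (one_div_nonneg.mpr (pow_nonneg h2'.le n))]
    have e2 : ‖1/L^n‖ = 1/L^n := by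
      rw [Real.norm_eq_abs, abs_of_nonneg (one_div_nonneg.mpr (pow_nonneg h1'.le n))]
    rw [e1, e2, mul_one_div, div_le_div_iff₀ (pow_pos h2' n) (pow_pos h1' n), one_mul, ← mul_pow]
    exact h4
  have htend : Tendsto (fun x : ℝ => Real.exp a * x) atTop atTop :=
    Tendsto.const_mul_atTop (Real.exp_pos a) tendsto_id
  have hcomp := (hP n hn).comp_tendsto htend
  have hEo : (fun x : ℝ => P (Real.exp a * x)
      - ∑ k ∈ range n, (k.factorial : ℝ)/(Real.log x + a)^(k+1))
      =o[atTop] (fun x : ℝ => 1/(Real.log x)^n) := by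
    refine IsLittleO.trans_isBigO ?_ hbig
    refine hcomp.congr' ?_ ?_
    · filter_upwards [hev] with x hx
      have hx0 : (0:ℝ) < x := lt_of_lt_of_le one_pos hx.2
      have hlog : Real.log (Real.exp a * x) = Real.log x + a := by
        rw [Real.log_mul (Real.exp_ne_zero a) (ne_of_gt hx0), Real.log_exp, add_comm]
      simp only [Function.comp_apply, hlog]
      congr 1
      rw [hIcc]
      refine Finset.sum_congr rfl fun k _ => ?_
      simp [Nat.add_sub_cancel]
    · filter_upwards [hev] with x hx
      have hx0 : (0:ℝ) < x := lt_of_lt_of_le one_pos hx.2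
      have hlog : Real.log (Real.exp a * x) = Real.log x + a := by
        rw [Real.log_mul (Real.exp_ne_zero a) (ne_of_gt hx0), Real.log_exp, add_comm]
      simp only [Function.comp_apply, hlog]
  have hAlg : (fun x : ℝ => ∑ k ∈ range n, (k.factorial : ℝ)/(Real.log x + a)^(k+1)
      - ∑ j ∈ range n, ((j.factorial : ℝ) * ∑ t ∈ range (j+1), (-a)^t/(t.factorial : ℝ))
          / (Real.log x)^(j+1))
      =o[atTop] (fun x : ℝ => 1/(Real.log x)^n) := by
    have hsum : (fun x : ℝ => ∑ k ∈ range n, (k.factorial : ℝ) * (-a)^(n-k)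
        * (∑ j ∈ range (k+1), ((j+(n-1-k)).choose (n-1-k) : ℝ) * ((Real.log x + a)/Real.log x)^j)
        / ((Real.log x)^(n-k) * (Real.log x + a)^(k+1)))
        =o[atTop] (fun x : ℝ => 1/(Real.log x)^n) := by
      rw [← Finset.sum_fn]
      apply IsLittleO.sum
      intro k hk
      exact rem_o a n k (Finset.mem_range.mp hk)
    refine hsum.congr' ?_ EventuallyEq.rfl
    filter_upwards [hev] with x hx
    have h1 : (1:ℝ) ≤ Real.log x := le_trans (by linarith [abs_nonneg a]) hx.1
    have hL : Real.log x ≠ 0 := by linarith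
    have hLa : Real.log x + a ≠ 0 := by
      have := neg_abs_le a; nlinarith [hx.1]
    exact (alg_ident a (Real.log x) hL hLa n).symm
  exact ((hEo.add hAlg).congr_left fun x => by ring)

theorem expansion_derangements_arrangements (P : ℝ → ℝ)
    (hP : ∀ n : ℕ, 1 ≤ n →
      (fun x : ℝ => P x - ∑ k ∈ Finset.Icc 1 n, (Nat.factorial (k - 1) : ℝ) / (Real.log x) ^ k)
        =o[atTop] (fun x : ℝ => 1 / (Real.log x) ^ n)) :
    (∀ n : ℕ, 1 ≤ n →
      (fun x : ℝ => P (Real.exp 1 * x)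
          - ∑ k ∈ Finset.Icc 1 n, derangementsReal (k - 1) / (Real.log x) ^ k)
        =o[atTop] (fun x : ℝ => 1 / (Real.log x) ^ n)) ∧
    (∀ n : ℕ, 1 ≤ n →
      (fun x : ℝ => P (x / Real.exp 1)
          - ∑ k ∈ Finset.Icc 1 n, arrangementsReal (k - 1) / (Real.log x) ^ k)
        =o[atTop] (fun x : ℝ => 1 / (Real.log x) ^ n)) := by
  have hIcc : ∀ (n : ℕ) (g : ℕ → ℝ), ∑ k ∈ Finset.Icc 1 n, g k = ∑ k ∈ Finset.range n, g (k+1) := by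
    intro n g
    rw [← Finset.Ico_add_one_right_eq_Icc, Finset.sum_Ico_eq_sum_range]
    simp [add_comm]
  constructor
  · intro n hn
    have h := main_expansion P hP 1 n hn
    refine h.congr_left fun x => ?_
    congr 1
    rw [hIcc]
    refine Finset.sum_congr rfl fun j _ => ?_
    simp only [Nat.add_sub_cancel, derangementsReal]
  · intro n hn
    have h := main_expansion P hP (-1) n hn
    refine h.congr_left fun x => ?_
    have harg : Real.exp (-1) * x = x / Real.exp 1 := by
      rw [Real.exp_neg, div_eq_mul_inv, mul_comm]
    rw [harg]
    congr 1
    rw [hIcc]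
    refine Finset.sum_congr rfl fun j _ => ?_
    simp only [Nat.add_sub_cancel, arrangementsReal, neg_neg, one_pow]
end

section
/- For every real x > 0, one has 1/(2x+1) < H_x − γ − log x < 1/(2x), where H_x = ψ(x+1) + γ with ψ the digamma function; in particular H_x − γ − log x ~ 1/(2x) as x → ∞. -/
open Real Filter Asymptotics

/-- The digamma function `ψ = Γ'/Γ`. -/
noncomputable def digamma (x : ℝ) : ℝ := deriv Real.Gamma x / Real.Gamma x

/-- The continuous interpolation `H_x = ψ(x+1) + γ` of the harmonic numbers. -/
noncomputable def harmonicInterp (x : ℝ) : ℝ :=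
  digamma (x + 1) + Real.eulerMascheroniConstant

open Finset Topology Set

private lemma aux_A {u : ℝ} (h0 : 0 < u) (h1 : u < 1) :
    2 * u < Real.log (1 + u) - Real.log (1 - u) := by
  set F : ℝ → ℝ := fun v => Real.log (1 + v) - Real.log (1 - v) - 2 * v with hF
  have key : StrictMonoOn F (Set.Ico (0:ℝ) 1) := by
    apply strictMonoOn_of_deriv_pos (convex_Ico 0 1)
    · apply ContinuousOn.sub
      apply ContinuousOn.sub
      · exact ((continuousOn_const.add continuousOn_id).log
          (fun v hv => by have := hv.1; simp only [Set.mem_Ico] at hv; simp only [Pi.add_apply, id_eq]; nlinarith [hv.1]))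
      · exact ((continuousOn_const.sub continuousOn_id).log
          (fun v hv => by simp only [Set.mem_Ico] at hv; simp only [Pi.sub_apply, id_eq]; nlinarith [hv.2]))
      · exact continuousOn_const.mul continuousOn_id
    · intro v hv
      rw [interior_Ico] at hv
      obtain ⟨hv0, hv1⟩ := hv
      have h1v : (0:ℝ) < 1 + v := by linarith
      have h2v : (0:ℝ) < 1 - v := by linarith
      have hd : HasDerivAt F (1 / (1 + v) - (-1) / (1 - v) - 2) v := by
        have d1 : HasDerivAt (fun w : ℝ => Real.log (1 + w)) (1 / (1 + v)) v := by
          simpa using ((hasDerivAt_id v).const_add 1).log h1v.ne'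
        have d2 : HasDerivAt (fun w : ℝ => Real.log (1 - w)) ((-1) / (1 - v)) v := by
          simpa using ((hasDerivAt_id v).const_sub 1).log h2v.ne'
        have d3 : HasDerivAt (fun w : ℝ => 2 * w) 2 v := by
          simpa using (hasDerivAt_id v).const_mul 2
        exact (d1.sub d2).sub d3
      rw [hd.deriv]
      have : 1 / (1 + v) - (-1) / (1 - v) - 2 = 2 * v ^ 2 / ((1 + v) * (1 - v)) := by
        field_simp; ring
      rw [this]; positivity
  have h0' : (0:ℝ) ∈ Set.Ico (0:ℝ) 1 := by constructor <;> norm_num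
  have hu' : u ∈ Set.Ico (0:ℝ) 1 := ⟨h0.le, h1⟩
  have := key h0' hu' h0
  simp only [hF] at this
  norm_num at this
  linarith

private lemma aux_B {u : ℝ} (h0 : 0 < u) :
    Real.log (1 + u) < u * (u + 2) / (2 * (u + 1)) := by
  set G : ℝ → ℝ := fun v => v * (v + 2) / (2 * (v + 1)) - Real.log (1 + v) with hG
  have key : StrictMonoOn G (Set.Ici (0:ℝ)) := by
    apply strictMonoOn_of_deriv_pos (convex_Ici 0)
    · apply ContinuousOn.sub
      · apply ContinuousOn.div
        · exact continuousOn_id.mul (continuousOn_id.add continuousOn_const)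
        · exact continuousOn_const.mul (continuousOn_id.add continuousOn_const)
        · intro v hv; simp only [Set.mem_Ici] at hv; nlinarith
      · exact ((continuousOn_const.add continuousOn_id).log
          (fun v hv => by simp only [Set.mem_Ici] at hv; simp only [Pi.add_apply, id_eq]; nlinarith))
    · intro v hv
      rw [interior_Ici] at hv
      have hv0 : (0:ℝ) < v := hv
      have h1v : (0:ℝ) < 1 + v := by linarith
      have h2v : (0:ℝ) < 2 * (v + 1) := by linarith
      have hd : HasDerivAt G
          (((v + 2 + v) * (2 * (v + 1)) - v * (v + 2) * 2) / (2 * (v + 1)) ^ 2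
            - 1 / (1 + v)) v := by
        have d1 : HasDerivAt (fun w : ℝ => w * (w + 2)) (v + 2 + v) v := by
          exact ((hasDerivAt_id' v).mul ((hasDerivAt_id' v).add_const 2)).congr_deriv (by ring)
        have d2 : HasDerivAt (fun w : ℝ => 2 * (w + 1)) 2 v := by
          simpa using ((hasDerivAt_id v).add_const 1).const_mul 2
        have d3 : HasDerivAt (fun w : ℝ => Real.log (1 + w)) (1 / (1 + v)) v := by
          simpa using ((hasDerivAt_id v).const_add 1).log h1v.ne'
        exact (d1.div d2 h2v.ne').sub d3
      rw [hd.deriv]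
      have : ((v + 2 + v) * (2 * (v + 1)) - v * (v + 2) * 2) / (2 * (v + 1)) ^ 2
          - 1 / (1 + v) = v ^ 2 / (2 * (v + 1) ^ 2) := by
        field_simp; ring
      rw [this]; positivity
  have := key (Set.self_mem_Ici) (Set.mem_Ici.mpr h0.le) h0
  simp only [hG] at this
  norm_num at this
  linarith
private lemma term_lb {t : ℝ} (ht : 0 < t) :
    1 / (2 * t + 1) - 1 / (2 * t + 3) < Real.log (t + 1) - Real.log t - 1 / (t + 1) := by
  have hu0 : (0:ℝ) < 1 / (2 * t + 1) := by positivity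
  have hu1 : 1 / (2 * t + 1) < 1 := by
    rw [div_lt_one (by linarith)]; linarith
  have h := aux_A hu0 hu1
  have e1 : 1 + 1 / (2 * t + 1) = (2 * t + 2) / (2 * t + 1) := by
    field_simp
    ring
  have e2 : 1 - 1 / (2 * t + 1) = (2 * t) / (2 * t + 1) := by
    field_simp
    ring
  rw [e1, e2, Real.log_div (by linarith) (by linarith),
    Real.log_div (by positivity) (by linarith)] at h
  have e3 : Real.log (2 * t + 2) = Real.log 2 + Real.log (t + 1) := by
    rw [← Real.log_mul (by norm_num) (by linarith)]; ring_nf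
  have e4 : Real.log (2 * t) = Real.log 2 + Real.log t := by
    rw [← Real.log_mul (by norm_num) (by linarith)]
  rw [e3, e4] at h
  have halg : 1 / (2 * t + 1) + 1 / (2 * t + 3) > 1 / (t + 1) := by
    rw [div_add_div _ _ (by linarith : (2*t+1:ℝ) ≠ 0) (by linarith : (2*t+3:ℝ) ≠ 0),
      gt_iff_lt, div_lt_div_iff₀ (by linarith) (by positivity)]
    nlinarith
  linarith

private lemma term_ub {t : ℝ} (ht : 0 < t) :
    Real.log (t + 1) - Real.log t - 1 / (t + 1) < 1 / (2 * t) - 1 / (2 * t + 2) := by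
  have h := aux_B (u := 1 / t) (by positivity)
  have e1 : 1 + 1 / t = (t + 1) / t := by
    field_simp
  rw [e1, Real.log_div (by linarith) (by linarith)] at h
  have e2 : 1 / t * (1 / t + 2) / (2 * (1 / t + 1)) = (2 * t + 1) / (2 * t * (t + 1)) := by
    rw [div_eq_div_iff (by positivity) (by positivity)]
    field_simp
    ring
  rw [e2] at h
  have e3 : (2 * t + 1) / (2 * t * (t + 1)) - 1 / (t + 1) = 1 / (2 * t) - 1 / (2 * t + 2) := by
    rw [div_sub_div _ _ (by positivity : (2*t*(t+1):ℝ) ≠ 0) (by linarith : (t+1:ℝ) ≠ 0),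
      div_sub_div _ _ (by positivity : (2*t:ℝ) ≠ 0) (by linarith : (2*t+2:ℝ) ≠ 0),
      div_eq_div_iff (by positivity) (by positivity)]
    ring
  linarith

private lemma hasSum_telescope_aux {b : ℕ → ℝ} (hmono : ∀ n, b (n + 1) ≤ b n)
    (hlim : Filter.Tendsto b Filter.atTop (nhds 0)) :
    HasSum (fun n => b n - b (n + 1)) (b 0) := by
  rw [hasSum_iff_tendsto_nat_of_nonneg (fun n => sub_nonneg.2 (hmono n))]
  have h : ∀ n, ∑ k ∈ Finset.range n, (b k - b (k + 1)) = b 0 - b n :=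
    fun n => Finset.sum_range_sub' b n
  simp only [h]
  simpa using tendsto_const_nhds.sub hlim
private lemma diffAt_logGamma {x : ℝ} (hx : 0 < x) :
    DifferentiableAt ℝ (fun y => Real.log (Real.Gamma y)) x := by
  refine (Real.differentiableAt_Gamma ?_).log (Real.Gamma_ne_zero ?_) <;>
    exact fun m => ne_of_gt (by have := Nat.cast_nonneg (α := ℝ) m; linarith)

private lemma digamma_eq_deriv {x : ℝ} (hx : 0 < x) :
    digamma x = deriv (fun y => Real.log (Real.Gamma y)) x := by
  rw [deriv.log (Real.differentiableAt_Gamma (fun m => ne_of_gt (by have := Nat.cast_nonneg (α := ℝ) m; linarith )))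
    (Real.Gamma_pos_of_pos hx).ne', digamma]

private lemma logGamma_rec {x : ℝ} (hx : 0 < x) :
    Real.log (Real.Gamma (x + 1)) = Real.log (Real.Gamma x) + Real.log x := by
  rw [Real.Gamma_add_one hx.ne', Real.log_mul hx.ne' (Real.Gamma_pos_of_pos hx).ne', add_comm]

private lemma deriv_logGamma_rec {x : ℝ} (hx : 0 < x) :
    deriv (fun y => Real.log (Real.Gamma y)) (x + 1)
      = deriv (fun y => Real.log (Real.Gamma y)) x + 1 / x := by
  rw [← deriv_comp_add_const, one_div, ← Real.deriv_log,
    ← deriv_add (diffAt_logGamma hx) (Real.differentiableAt_log hx.ne')]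
  apply Filter.EventuallyEq.deriv_eq
  filter_upwards [eventually_gt_nhds hx] with y hy
  exact logGamma_rec hy

private lemma deriv_logGamma_le_log {x : ℝ} (hx : 0 < x) :
    deriv (fun y => Real.log (Real.Gamma y)) x ≤ Real.log x := by
  have hconv : ConvexOn ℝ (Set.Ioi 0) (Real.log ∘ Real.Gamma) := Real.convexOn_log_Gamma
  have hs : slope (fun y => Real.log (Real.Gamma y)) x (x + 1) = Real.log x := by
    rw [slope_def_field]
    simp only [add_sub_cancel_left]
    rw [logGamma_rec hx]
    ring_nf
  have := ConvexOn.deriv_le_slope hconv (Set.mem_Ioi.mpr hx)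
    (Set.mem_Ioi.mpr (by linarith : (0:ℝ) < x + 1)) (by linarith) (diffAt_logGamma hx)
  rw [show (Real.log ∘ Real.Gamma) = (fun y => Real.log (Real.Gamma y)) from rfl] at this
  rwa [hs] at this

private lemma log_le_deriv_logGamma {x : ℝ} (hx : 0 < x) :
    Real.log x ≤ deriv (fun y => Real.log (Real.Gamma y)) (x + 1) := by
  have hconv : ConvexOn ℝ (Set.Ioi 0) (Real.log ∘ Real.Gamma) := Real.convexOn_log_Gamma
  have hs : slope (fun y => Real.log (Real.Gamma y)) x (x + 1) = Real.log x := by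
    rw [slope_def_field]
    simp only [add_sub_cancel_left]
    rw [logGamma_rec hx]
    ring_nf
  have := ConvexOn.slope_le_deriv hconv (Set.mem_Ioi.mpr hx)
    (Set.mem_Ioi.mpr (by linarith : (0:ℝ) < x + 1)) (by linarith)
    (diffAt_logGamma (by linarith : (0:ℝ) < x + 1))
  rw [show (Real.log ∘ Real.Gamma) = (fun y => Real.log (Real.Gamma y)) from rfl] at this
  rwa [hs] at this

private lemma deriv_logGamma_iterate {x : ℝ} (hx : 0 < x) (n : ℕ) :
    deriv (fun y => Real.log (Real.Gamma y)) (x + n)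
      = deriv (fun y => Real.log (Real.Gamma y)) x + ∑ k ∈ Finset.range n, 1 / (x + k) := by
  induction n with
  | zero => simp
  | succ n ih =>
    have hxn : (0:ℝ) < x + n := by positivity
    have e : x + (n + 1 : ℕ) = (x + n) + 1 := by push_cast; ring
    rw [e, deriv_logGamma_rec hxn, ih, Finset.sum_range_succ]
    ring

private lemma tendsto_inv_shift (x : ℝ) (c : ℝ) :
    Filter.Tendsto (fun n : ℕ => 1 / (x + n + c)) Filter.atTop (nhds 0) := by
  have h1 : Filter.Tendsto (fun n : ℕ => x + (n:ℝ) + c) Filter.atTop Filter.atTop := by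
    apply Filter.tendsto_atTop_add_const_right
    exact Filter.tendsto_atTop_add_const_left _ x tendsto_natCast_atTop_atTop
  exact h1.inv_tendsto_atTop.congr fun j => (one_div _).symm

private lemma tendsto_deriv_logGamma {x : ℝ} (hx : 0 < x) :
    Filter.Tendsto (fun n : ℕ => Real.log (x + n) - ∑ k ∈ Finset.range n, 1 / (x + k))
      Filter.atTop (nhds (deriv (fun y => Real.log (Real.Gamma y)) x)) := by
  set ψ := deriv (fun y => Real.log (Real.Gamma y)) with hψ
  have hlb : ∀ᶠ n : ℕ in Filter.atTop,
      ψ x ≤ Real.log (x + n) - ∑ k ∈ Finset.range n, 1 / (x + k) := by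
    filter_upwards [Filter.eventually_ge_atTop 1] with n hn
    have hxn : (0:ℝ) < x + n := by positivity
    have h1 : ψ (x + n) = ψ x + ∑ k ∈ Finset.range n, 1 / (x + k) :=
      deriv_logGamma_iterate hx n
    have h2 : ψ (x + n) ≤ Real.log (x + n) := deriv_logGamma_le_log hxn
    linarith
  have hub : ∀ᶠ n : ℕ in Filter.atTop,
      Real.log (x + n) - ∑ k ∈ Finset.range n, 1 / (x + k)
        ≤ ψ x + 1 / (x + n + (-1)) := by
    filter_upwards [Filter.eventually_ge_atTop 1] with n hn
    have hxn1 : (0:ℝ) < x + n - 1 := by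
      have : (1:ℝ) ≤ n := by exact_mod_cast hn
      linarith
    have h1 : ψ (x + n) = ψ x + ∑ k ∈ Finset.range n, 1 / (x + k) :=
      deriv_logGamma_iterate hx n
    have h2 : Real.log (x + n - 1) ≤ ψ (x + n) := by
      have := log_le_deriv_logGamma hxn1
      rwa [show x + n - 1 + 1 = x + n by ring] at this
    have h3 : Real.log (x + n) - Real.log (x + n - 1) ≤ 1 / (x + n - 1) := by
      rw [← Real.log_div (by linarith) hxn1.ne']
      have h4 := Real.log_le_sub_one_of_pos
        (show (0:ℝ) < (x + n) / (x + n - 1) by positivity)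
      have h5 : (x + n) / (x + n - 1) - 1 = 1 / (x + n - 1) := by
        field_simp
        ring
      linarith
    have : x + n + (-1) = x + n - 1 := by ring
    rw [this]
    linarith
  have hH : Filter.Tendsto (fun n : ℕ => ψ x + 1 / (x + n + (-1))) Filter.atTop
      (nhds (ψ x)) := by
    simpa using tendsto_const_nhds.add (tendsto_inv_shift x (-1))
  exact tendsto_of_tendsto_of_tendsto_of_le_of_le' tendsto_const_nhds hH hlb hub
private lemma tendsto_log_ratio (x : ℝ) (hx : 0 < x) :
    Filter.Tendsto (fun n : ℕ => Real.log (x + n + 1) - Real.log (x + n))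
      Filter.atTop (nhds 0) := by
  have hub : ∀ᶠ n : ℕ in Filter.atTop,
      Real.log (x + n + 1) - Real.log (x + n) ≤ 1 / (x + n + 0) := by
    filter_upwards with n
    have hxn : (0:ℝ) < x + n := by positivity
    rw [← Real.log_div (by linarith) hxn.ne']
    have h4 := Real.log_le_sub_one_of_pos (show (0:ℝ) < (x + n + 1) / (x + n) by positivity)
    have h5 : (x + n + 1) / (x + n) - 1 = 1 / (x + n) := by field_simp; ring
    rw [add_zero]
    linarith
  have hlb : ∀ᶠ n : ℕ in Filter.atTop,
      (0:ℝ) ≤ Real.log (x + n + 1) - Real.log (x + n) := by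
    filter_upwards with n
    have hxn : (0:ℝ) < x + n := by positivity
    have := Real.log_le_log (by linarith : (0:ℝ) < x + n) (by linarith : x + n ≤ x + n + 1)
    linarith
  exact tendsto_of_tendsto_of_tendsto_of_le_of_le' tendsto_const_nhds
    (by simpa using tendsto_inv_shift x 0) hlb hub

private lemma tendsto_sum_T {x : ℝ} (hx : 0 < x) :
    Filter.Tendsto (fun n : ℕ => ∑ k ∈ Finset.range n,
        (Real.log (x + k + 1) - Real.log (x + k) - 1 / (x + k + 1)))
      Filter.atTop (nhds (digamma (x + 1) - Real.log x)) := by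
  have hx1 : (0:ℝ) < x + 1 := by linarith
  have hmain := tendsto_deriv_logGamma hx1
  have hzero := tendsto_log_ratio x hx
  have hsum : ∀ n : ℕ, ∑ k ∈ Finset.range n,
      (Real.log (x + k + 1) - Real.log (x + k) - 1 / (x + k + 1))
      = (Real.log (x + 1 + n) - ∑ k ∈ Finset.range n, 1 / (x + 1 + k))
        - Real.log x - (Real.log (x + n + 1) - Real.log (x + n)) := by
    intro n
    have e1 : ∑ k ∈ Finset.range n, (Real.log (x + k + 1) - Real.log (x + k))
        = Real.log (x + n) - Real.log x := by
      have := Finset.sum_range_sub (fun k : ℕ => Real.log (x + k)) n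
      simp only [Nat.cast_add, Nat.cast_one, Nat.cast_zero, add_zero] at this
      rw [← this]
      apply Finset.sum_congr rfl
      intro k _
      ring_nf
    have e2 : ∑ k ∈ Finset.range n, (1:ℝ) / (x + k + 1)
        = ∑ k ∈ Finset.range n, (1:ℝ) / (x + 1 + k) := by
      apply Finset.sum_congr rfl
      intro k _
      ring_nf
    rw [Finset.sum_sub_distrib, e1, e2]
    simp only [one_div]
    ring
  rw [show digamma (x + 1) - Real.log x
      = deriv (fun y => Real.log (Real.Gamma y)) (x + 1) - Real.log x - 0 by
    rw [digamma_eq_deriv hx1]; ring]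
  apply Filter.Tendsto.congr (fun n => (hsum n).symm)
  exact (hmain.sub tendsto_const_nhds).sub hzero

theorem harmonicInterp_sub_log_bounds :
    (∀ x : ℝ, 0 < x →
      1 / (2 * x + 1) < harmonicInterp x - Real.eulerMascheroniConstant - Real.log x ∧
      harmonicInterp x - Real.eulerMascheroniConstant - Real.log x < 1 / (2 * x)) ∧
    (fun x : ℝ => harmonicInterp x - Real.eulerMascheroniConstant - Real.log x)
      ~[atTop] (fun x : ℝ => 1 / (2 * x)) := by
  have key : ∀ x : ℝ, 0 < x →
      1 / (2 * x + 1) < digamma (x + 1) - Real.log x ∧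
      digamma (x + 1) - Real.log x < 1 / (2 * x) := by
    intro x hx
    set u : ℕ → ℝ := fun k => Real.log (x + k + 1) - Real.log (x + k) - 1 / (x + k + 1)
      with hu_def
    have hxk : ∀ k : ℕ, (0:ℝ) < x + k := fun k => by positivity
    have hlbk : ∀ k, 1 / (2 * (x + k) + 1) - 1 / (2 * (x + k) + 3) < u k :=
      fun k => term_lb (hxk k)
    have hubk : ∀ k, u k < 1 / (2 * (x + k)) - 1 / (2 * (x + k) + 2) :=
      fun k => term_ub (hxk k)
    have hvpos : ∀ k : ℕ, (0:ℝ) < 1 / (2 * (x + k) + 1) - 1 / (2 * (x + k) + 3) := by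
      intro k
      rw [sub_pos]
      apply one_div_lt_one_div_of_lt
      · positivity
      · linarith [hxk k]
    have hu0 : ∀ k, 0 ≤ u k := fun k => le_of_lt ((hvpos k).trans (hlbk k))
    have hSum_u : HasSum u (digamma (x + 1) - Real.log x) :=
      (hasSum_iff_tendsto_nat_of_nonneg hu0 _).mpr (tendsto_sum_T hx)
    -- lower telescoping series
    have hbv : HasSum (fun k : ℕ => 1 / (2 * (x + k) + 1) - 1 / (2 * (x + k) + 3))
        (1 / (2 * x + 1)) := by
      have hmono : ∀ n : ℕ, (fun j : ℕ => 1 / (2 * (x + j) + 1)) (n + 1)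
          ≤ (fun j : ℕ => 1 / (2 * (x + j) + 1)) n := by
        intro n
        apply one_div_le_one_div_of_le
        · positivity
        · push_cast; linarith
      have hlim : Filter.Tendsto (fun j : ℕ => 1 / (2 * (x + j) + 1))
          Filter.atTop (nhds 0) := by
        have h1 : Filter.Tendsto (fun j : ℕ => 2 * (x + j) + 1) Filter.atTop Filter.atTop := by
          apply Filter.tendsto_atTop_add_const_right
          exact (Filter.tendsto_atTop_add_const_left _ x
            tendsto_natCast_atTop_atTop).const_mul_atTop two_pos
        exact h1.inv_tendsto_atTop.congr fun j => (one_div _).symm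
      have heq : (fun k : ℕ => 1 / (2 * (x + k) + 1) - 1 / (2 * (x + k) + 3))
          = fun k : ℕ => (fun j : ℕ => 1 / (2 * (x + j) + 1)) k
              - (fun j : ℕ => 1 / (2 * (x + j) + 1)) (k + 1) := by
        funext k
        simp only
        push_cast
        ring_nf
      rw [heq, show (1:ℝ) / (2 * x + 1) = (fun j : ℕ => 1 / (2 * (x + j) + 1)) 0 by norm_num]
      exact hasSum_telescope_aux hmono hlim
    -- upper telescoping series
    have hbw : HasSum (fun k : ℕ => 1 / (2 * (x + k)) - 1 / (2 * (x + k) + 2))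
        (1 / (2 * x)) := by
      have hmono : ∀ n : ℕ, (fun j : ℕ => 1 / (2 * (x + j))) (n + 1)
          ≤ (fun j : ℕ => 1 / (2 * (x + j))) n := by
        intro n
        apply one_div_le_one_div_of_le
        · positivity
        · push_cast; linarith
      have hlim : Filter.Tendsto (fun j : ℕ => 1 / (2 * (x + j)))
          Filter.atTop (nhds 0) := by
        have h1 : Filter.Tendsto (fun j : ℕ => 2 * (x + j)) Filter.atTop Filter.atTop :=
          (Filter.tendsto_atTop_add_const_left _ x
            tendsto_natCast_atTop_atTop).const_mul_atTop two_pos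
        exact h1.inv_tendsto_atTop.congr fun j => (one_div _).symm
      have heq : (fun k : ℕ => 1 / (2 * (x + k)) - 1 / (2 * (x + k) + 2))
          = fun k : ℕ => (fun j : ℕ => 1 / (2 * (x + j))) k
              - (fun j : ℕ => 1 / (2 * (x + j))) (k + 1) := by
        funext k
        simp only
        push_cast
        ring_nf
      rw [heq, show (1:ℝ) / (2 * x) = (fun j : ℕ => 1 / (2 * (x + j))) 0 by norm_num]
      exact hasSum_telescope_aux hmono hlim
    constructor
    · rw [← hSum_u.tsum_eq, ← hbv.tsum_eq]
      exact Summable.tsum_lt_tsum (fun k => (hlbk k).le) (hlbk 0) hbv.summable hSum_u.summable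
    · rw [← hSum_u.tsum_eq, ← hbw.tsum_eq]
      exact Summable.tsum_lt_tsum (fun k => (hubk k).le) (hubk 0) hSum_u.summable hbw.summable
  have hval : ∀ x : ℝ, harmonicInterp x - Real.eulerMascheroniConstant - Real.log x
      = digamma (x + 1) - Real.log x := by
    intro x
    rw [harmonicInterp]
    ring
  constructor
  · intro x hx
    rw [hval x]
    exact key x hx
  · rw [Asymptotics.isEquivalent_iff_tendsto_one (by
      filter_upwards [Filter.eventually_gt_atTop (0:ℝ)] with x hx
      positivity)]
    have hg : Filter.Tendsto (fun x : ℝ => 1 - 1 / (2 * x + 1)) Filter.atTop (nhds 1) := by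
      have h0 : Filter.Tendsto (fun x : ℝ => 1 / (2 * x + 1)) Filter.atTop (nhds 0) := by
        have h1 : Filter.Tendsto (fun x : ℝ => 2 * x + 1) Filter.atTop Filter.atTop := by
          apply Filter.tendsto_atTop_add_const_right
          exact Filter.tendsto_id.const_mul_atTop two_pos
        exact h1.inv_tendsto_atTop.congr fun j => (one_div _).symm
      simpa using tendsto_const_nhds.sub h0
    apply tendsto_of_tendsto_of_tendsto_of_le_of_le' hg
      (tendsto_const_nhds : Filter.Tendsto (fun _ : ℝ => (1:ℝ)) Filter.atTop (nhds 1))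
    · filter_upwards [Filter.eventually_gt_atTop (0:ℝ)] with x hx
      obtain ⟨h1, _⟩ := key x hx
      simp only [Pi.div_apply]
      rw [hval x, div_div_eq_mul_div, div_one]
      have e : 1 - 1 / (2 * x + 1) = (1 / (2 * x + 1)) * (2 * x) := by
        field_simp
        ring
      rw [e]
      exact mul_le_mul_of_nonneg_right h1.le (by positivity)
    · filter_upwards [Filter.eventually_gt_atTop (0:ℝ)] with x hx
      obtain ⟨_, h2⟩ := key x hx
      simp only [Pi.div_apply]
      rw [hval x, div_div_eq_mul_div, div_one]
      have e : (1:ℝ) = (1 / (2 * x)) * (2 * x) := by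
        field_simp
      calc (digamma (x + 1) - Real.log x) * (2 * x)
          ≤ (1 / (2 * x)) * (2 * x) :=
            mul_le_mul_of_nonneg_right h2.le (by positivity)
        _ = 1 := e.symm
end

section
/- For all real x > −1/2, one has log(x + 1/2) < ψ(x+1) < log(x+1), where ψ is the digamma function. -/
open Real Set Filter

lemma hasDerivAt_logGamma {y : ℝ} (hy : 0 < y) :
    HasDerivAt (fun t => Real.log (Real.Gamma t)) (digamma y) y := by
  have hne : ∀ m : ℕ, y ≠ -m := by
    intro m
    have h : (-m : ℝ) ≤ 0 := by simp
    exact fun he => absurd (he ▸ hy) (by linarith)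
  have h1 : HasDerivAt Real.Gamma (deriv Real.Gamma y) y :=
    (Real.differentiableAt_Gamma hne).hasDerivAt
  have h2 := (Real.hasDerivAt_log (Real.Gamma_pos_of_pos hy).ne').comp y h1
  refine h2.congr_deriv ?_
  rw [digamma, div_eq_inv_mul]

lemma digamma_add_one {y : ℝ} (hy : 0 < y) : digamma (y + 1) = digamma y + 1/y := by
  have h1 : HasDerivAt (fun t => Real.log (Real.Gamma (t + 1))) (digamma (y+1) * 1) y :=
    (hasDerivAt_logGamma (by linarith)).comp y ((hasDerivAt_id y).add_const 1)
  have h2 : HasDerivAt (fun t => Real.log (Real.Gamma t) + Real.log t) (digamma y + y⁻¹) y :=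
    (hasDerivAt_logGamma hy).add (Real.hasDerivAt_log hy.ne')
  have heq : (fun t => Real.log (Real.Gamma (t + 1)))
      =ᶠ[nhds y] (fun t => Real.log (Real.Gamma t) + Real.log t) := by
    filter_upwards [eventually_gt_nhds hy] with t ht
    rw [Real.Gamma_add_one ht.ne', Real.log_mul ht.ne' (Real.Gamma_pos_of_pos ht).ne', add_comm]
  have := (h1.congr_of_eventuallyEq heq.symm).unique h2
  rw [mul_one] at this
  rw [this, one_div]

lemma digamma_strictMonoOn : StrictMonoOn digamma (Ioi 0) := by
  have hmono : MonotoneOn digamma (Ioi 0) := by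
    have h := (Real.convexOn_log_Gamma).monotoneOn_deriv
      (fun t ht => ((hasDerivAt_logGamma ht).differentiableAt))
    intro a ha b hb hab
    have := h ha hb hab
    rwa [show (Real.log ∘ Real.Gamma) = fun t => Real.log (Real.Gamma t) from rfl,
      (hasDerivAt_logGamma ha).deriv, (hasDerivAt_logGamma hb).deriv] at this
  intro a ha b hb hab
  rcases lt_or_eq_of_le (hmono ha hb hab.le) with h | h
  · exact h
  exfalso
  have h1 : digamma (a+1) = digamma a + 1/a := digamma_add_one ha
  have h2 : digamma (b+1) = digamma b + 1/b := digamma_add_one hb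
  have h3 : digamma (a+1) ≤ digamma (b+1) :=
    hmono (by simp; linarith [mem_Ioi.mp ha]) (by simp; linarith [mem_Ioi.mp hb]) (by linarith)
  have : (1:ℝ)/b < 1/a := by
    apply one_div_lt_one_div_of_lt (mem_Ioi.mp ha) hab
  linarith [h, h1, h2, h3]

lemma exists_digamma_eq {y : ℝ} (hy : 0 < y) :
    ∃ c ∈ Ioo y (y+1), digamma c = Real.log y := by
  have hcont : ContinuousOn (fun t => Real.log (Real.Gamma t)) (Icc y (y+1)) := by
    intro t ht
    have ht0 : 0 < t := lt_of_lt_of_le hy ht.1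
    exact (hasDerivAt_logGamma ht0).continuousAt.continuousWithinAt
  have hderiv : ∀ t ∈ Ioo y (y+1), HasDerivAt (fun t => Real.log (Real.Gamma t)) (digamma t) t :=
    fun t ht => hasDerivAt_logGamma (lt_trans hy ht.1)
  obtain ⟨c, hc, hceq⟩ := exists_hasDerivAt_eq_slope _ _ (by linarith : y < y + 1) hcont hderiv
  refine ⟨c, hc, ?_⟩
  rw [hceq, Real.Gamma_add_one hy.ne', Real.log_mul hy.ne' (Real.Gamma_pos_of_pos hy).ne']
  ring

lemma digamma_lt_log {y : ℝ} (hy : 0 < y) : digamma y < Real.log y := by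
  obtain ⟨c, hc, hceq⟩ := exists_digamma_eq hy
  rw [← hceq]
  exact digamma_strictMonoOn (mem_Ioi.mpr hy) (mem_Ioi.mpr (lt_trans hy hc.1)) hc.1

lemma log_lt_digamma_aux {y : ℝ} (hy : 1 < y) : Real.log (y - 1) < digamma y := by
  obtain ⟨c, hc, hceq⟩ := exists_digamma_eq (by linarith : 0 < y - 1)
  rw [← hceq]
  have hc2 : c < y := by have := hc.2; linarith
  exact digamma_strictMonoOn (mem_Ioi.mpr (by linarith [hc.1])) (mem_Ioi.mpr (by linarith)) hc2

-- Step: for z > 1/2, 1/z < log (z+1/2) - log (z-1/2)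
lemma exp_step {v : ℝ} (hv : 0 < v) : (2 - v) < (2 + v) * Real.exp (-v) := by
  set F : ℝ → ℝ := fun v => (2 + v) * Real.exp (-v) - (2 - v) with hF
  have hd : ∀ w : ℝ, HasDerivAt F (Real.exp (-w) - (2 + w) * Real.exp (-w) + 1) w := by
    intro w
    have h1 : HasDerivAt (fun t : ℝ => 2 + t) 1 w := by
      simpa using (hasDerivAt_id w).const_add 2
    have h2 : HasDerivAt (fun t : ℝ => Real.exp (-t)) (-Real.exp (-w)) w := by
      simpa [Function.comp_def] using (Real.hasDerivAt_exp (-w)).comp w (hasDerivAt_neg w)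
    have h3 : HasDerivAt (fun t : ℝ => 2 - t) (-1) w := by
      simpa using (hasDerivAt_id w).const_sub 2
    have := (h1.mul h2).sub h3
    refine this.congr_deriv ?_
    ring
  have hmono : StrictMonoOn F (Ici 0) := by
    apply strictMonoOn_of_deriv_pos (convex_Ici 0)
    · exact Continuous.continuousOn (by fun_prop)
    · intro w hw
      rw [interior_Ici] at hw
      rw [(hd w).deriv]
      have : (1 + w) * Real.exp (-w) < 1 := by
        rw [Real.exp_neg]
        rw [mul_inv_lt_iff₀ (Real.exp_pos w)]
        have := Real.add_one_lt_exp (ne_of_gt hw); linarith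
      nlinarith [Real.exp_pos (-w)]
  have h0 : F 0 = 0 := by simp [hF]
  have := hmono (le_refl (0:ℝ) : (0:ℝ) ∈ Ici 0) (le_of_lt hv) hv
  rw [h0] at this
  simp only [hF] at this
  linarith

lemma log_step {z : ℝ} (hz : 1/2 < z) :
    1/z < Real.log (z + 1/2) - Real.log (z - 1/2) := by
  have hz0 : 0 < z := by linarith
  have hv : 0 < 1/z := by positivity
  have key := exp_step hv
  -- (2 - 1/z) < (2 + 1/z) * exp(-(1/z))
  have h1 : (z - 1/2) * Real.exp (1/z) < z + 1/2 := by
    have hez : 0 < Real.exp (1/z) := Real.exp_pos _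
    have := mul_lt_mul_of_pos_left key (by linarith : (0:ℝ) < z/2)
    rw [Real.exp_neg] at this
    have hrw : z / 2 * (2 - 1/z) = z - 1/2 := by field_simp
    have hrw2 : z / 2 * (2 + 1/z) = z + 1/2 := by field_simp
    rw [hrw] at this
    calc (z - 1/2) * Real.exp (1/z) < z/2 * ((2 + 1/z) * (Real.exp (1/z))⁻¹) * Real.exp (1/z) := by
          apply mul_lt_mul_of_pos_right this hez
      _ = z/2 * (2 + 1/z) := by field_simp
      _ = z + 1/2 := hrw2
  have hpos : 0 < (z - 1/2) * Real.exp (1/z) := by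
    apply mul_pos (by linarith) (Real.exp_pos _)
  have := Real.log_lt_log hpos h1
  rw [Real.log_mul (by linarith : z - 1/2 ≠ 0) (Real.exp_ne_zero _), Real.log_exp] at this
  linarith

lemma log_le_digamma {z : ℝ} (hz : 1/2 < z) : Real.log (z - 1/2) ≤ digamma z := by
  set a : ℕ → ℝ := fun n => digamma (z + n) - Real.log (z + n - 1/2) with ha
  have hanti : Antitone a := by
    apply antitone_nat_of_succ_le
    intro n
    have hw : 1/2 < z + n := by
      have : (0:ℝ) ≤ n := Nat.cast_nonneg n
      linarith
    have hw0 : 0 < z + n := by linarith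
    have hfe := digamma_add_one hw0
    have hstep := log_step hw
    simp only [ha]
    push_cast
    have h1 : z + (n + 1) = (z + n) + 1 := by ring
    rw [h1, hfe]
    have h2 : z + n + 1 - 1/2 = (z + n) + 1/2 := by ring
    rw [h2]
    linarith
  have hlb : ∀ n : ℕ, 1 ≤ n → Real.log (z + n - 1) - Real.log (z + n - 1/2) ≤ a 0 := by
    intro n hn
    have hyn : 1 < z + n := by
      have : (1:ℝ) ≤ n := by exact_mod_cast hn
      linarith
    have := log_lt_digamma_aux hyn
    have h2 : a n ≤ a 0 := hanti (Nat.zero_le n)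
    simp only [ha] at h2 ⊢
    linarith
  -- the sequence c tends to 0
  have htend : Tendsto (fun n : ℕ => Real.log (z + n - 1) - Real.log (z + n - 1/2))
      atTop (nhds 0) := by
    have hat : Tendsto (fun n : ℕ => z + (n:ℝ) - 1) atTop atTop := by
      apply tendsto_atTop_add_const_right
      apply tendsto_atTop_add_const_left
      exact tendsto_natCast_atTop_atTop
    have hlow : Tendsto (fun n : ℕ => -((1:ℝ)/2) * (z + n - 1)⁻¹) atTop (nhds 0) := by
      have := hat.inv_tendsto_atTop
      have h2 := this.const_mul (-((1:ℝ)/2))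
      simpa using h2
    apply tendsto_of_tendsto_of_tendsto_of_le_of_le' hlow tendsto_const_nhds
    · filter_upwards [eventually_ge_atTop 1] with n hn
      have hyn : (0:ℝ) < z + n - 1 := by
        have : (1:ℝ) ≤ n := by exact_mod_cast hn
        linarith
      have hq : (0:ℝ) < (z + n - 1/2) / (z + n - 1) := by
        apply div_pos (by linarith) hyn
      have := Real.log_le_sub_one_of_pos hq
      rw [Real.log_div (by linarith) (by linarith)] at this
      have hineq : (z + n - 1/2) / (z + n - 1) - 1 = (1/2) * (z + n - 1)⁻¹ := by
        field_simp
        ring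
      rw [hineq] at this
      linarith
    · filter_upwards [eventually_ge_atTop 1] with n hn
      have hyn : (0:ℝ) < z + n - 1 := by
        have : (1:ℝ) ≤ n := by exact_mod_cast hn
        linarith
      have := Real.log_le_log (by linarith : (0:ℝ) < z + n - 1) (by linarith : z + n - 1 ≤ z + n - 1/2)
      linarith
  have h0 : (0:ℝ) ≤ a 0 := by
    apply le_of_tendsto htend
    filter_upwards [eventually_ge_atTop 1] with n hn
    exact hlb n hn
  simp only [ha, Nat.cast_zero, add_zero] at h0
  linarith

lemma log_lt_digamma {z : ℝ} (hz : 1/2 < z) : Real.log (z - 1/2) < digamma z := by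
  have h1 := log_le_digamma (by linarith : 1/2 < z + 1)
  have h2 := log_step hz
  have h3 := digamma_add_one (by linarith : 0 < z)
  have h4 : z + 1 - 1/2 = z + 1/2 := by ring
  rw [h4] at h1
  linarith

theorem log_lt_digamma_lt_log (x : ℝ) (hx : -(1/2) < x) :
    Real.log (x + 1/2) < digamma (x + 1) ∧ digamma (x + 1) < Real.log (x + 1) := by
  have hy : 1/2 < x + 1 := by linarith
  constructor
  · have := log_lt_digamma hy
    have h4 : x + 1 - 1/2 = x + 1/2 := by ring
    rwa [h4] at this
  · exact digamma_lt_log (by linarith : 0 < x + 1)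
end

section
/- The limit lim_{n→∞} (li(n) − ∑_{k=1}^{n} 1/(H_k − γ)) exists (is a finite real number). -/
open Real Filter MeasureTheory Topology

/-- Principal value of `∫_0^x dt/(log t)^m` around the singularity at `t = 1`. -/
noncomputable def pvLogInt (m : ℕ) (x : ℝ) : ℝ :=
  limUnder (nhdsWithin (0:ℝ) (Set.Ioi 0)) (fun ε =>
    (∫ t in (0:ℝ)..(1 - ε), 1 / (Real.log t) ^ m) +
      ∫ t in (1 + ε)..x, 1 / (Real.log t) ^ m)

/-- `li x` is the Cauchy principal value of `∫_0^x dt / log t`. -/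
noncomputable def li (x : ℝ) : ℝ := pvLogInt 1 x

namespace LiAux

/-- The regularized integrand `1/log t - 1/(t-1)`. -/
noncomputable def h (t : ℝ) : ℝ := 1 / Real.log t - 1 / (t - 1)

lemma h_bound : ∀ t ∈ Set.Icc (0:ℝ) 2, |h t| ≤ 4 := by
  rintro t ⟨ht0, ht2⟩
  rcases eq_or_lt_of_le ht0 with rfl | ht0
  · norm_num [h, Real.log_zero]
  rcases lt_trichotomy t 1 with ht1 | rfl | ht1
  · -- 0 < t < 1
    have hlogneg : Real.log t < 0 := Real.log_neg ht0 ht1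
    rcases le_or_gt t (1/2) with hhalf | hhalf
    · -- t ∈ (0, 1/2]
      have hlog2 : (1/2:ℝ) < Real.log 2 := by
        have := Real.log_two_gt_d9; linarith
      have hle : Real.log t ≤ Real.log (1/2) := by gcongr
      have hl2 : Real.log 2 ≤ -Real.log t := by
        rw [show Real.log (1/2) = -Real.log 2 by rw [one_div, Real.log_inv]] at hle
        linarith
      have h1 : 1 / (-Real.log t) ≤ 1 / Real.log 2 :=
        one_div_le_one_div_of_le (by linarith) hl2
      have h2 : 1 / Real.log 2 ≤ 2 := by
        rw [div_le_iff₀ (by linarith)]; linarith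
      have h3 : 1 / (-Real.log t) = -(1 / Real.log t) := by rw [div_neg]
      have hA : -(2:ℝ) ≤ 1 / Real.log t := by rw [h3] at h1; linarith
      have hB : 1 / Real.log t < 0 := div_neg_of_pos_of_neg one_pos hlogneg
      have hC : 1 / (t - 1) = -(1 / (1 - t)) := by
        rw [show t - 1 = -(1 - t) by ring, div_neg]
      have hD : 0 < 1 / (1 - t) := by apply div_pos one_pos; linarith
      have hE : 1 / (1 - t) ≤ 2 := by
        rw [div_le_iff₀ (by linarith)]; linarith
      rw [h, hC, abs_le]
      constructor <;> linarith
    · -- t ∈ (1/2, 1)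
      have hbpos : (0:ℝ) < 1 - t := by linarith
      have hapos : (0:ℝ) < -Real.log t := by linarith
      have hba : 1 - t ≤ -Real.log t := by
        have := Real.log_le_sub_one_of_pos ht0; linarith
      have hat : (-Real.log t) * t ≤ 1 - t := by
        have h' := Real.log_le_sub_one_of_pos (show (0:ℝ) < t⁻¹ by positivity)
        rw [Real.log_inv] at h'
        have h2 : (-Real.log t) * t ≤ (t⁻¹ - 1) * t :=
          mul_le_mul_of_nonneg_right (by linarith) (by linarith)
        have h3 : (t⁻¹ - 1) * t = 1 - t := by field_simp
        linarith
      have hring : (-Real.log t) * (1 - t) = (-Real.log t) - (-Real.log t) * t := by ring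
      have hkey : -Real.log t - (1 - t) ≤ (-Real.log t) * (1 - t) := by linarith
      have e : h t = 1/(1-t) - 1/(-Real.log t) := by
        rw [h, show t - 1 = -(1-t) by ring, div_neg, div_neg]; ring
      have h1 : 1/(-Real.log t) ≤ 1/(1-t) := one_div_le_one_div_of_le hbpos hba
      have h2 : 1/(1-t) - 1/(-Real.log t) ≤ 1 := by
        rw [show 1/(1-t) - 1/(-Real.log t)
            = ((-Real.log t) - (1-t))/((-Real.log t)*(1-t)) by
          rw [div_sub_div _ _ hbpos.ne' hapos.ne']; ring, div_le_one (mul_pos hapos hbpos)]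
        linarith
      rw [e, abs_le]
      constructor <;> linarith
  · simp [h]
  · -- 1 < t ≤ 2
    have hbpos : (0:ℝ) < t - 1 := by linarith
    have hapos : (0:ℝ) < Real.log t := Real.log_pos ht1
    have hab : Real.log t ≤ t - 1 := Real.log_le_sub_one_of_pos (by linarith)
    have hat : t - 1 ≤ Real.log t * t := by
      have h' := Real.log_le_sub_one_of_pos (show (0:ℝ) < t⁻¹ by positivity)
      rw [Real.log_inv] at h'
      have h2 : (-Real.log t) * t ≤ (t⁻¹ - 1) * t :=
        mul_le_mul_of_nonneg_right (by linarith) (by linarith)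
      have h3 : (t⁻¹ - 1) * t = 1 - t := by field_simp
      nlinarith
    have hring : Real.log t * (t - 1) = Real.log t * t - Real.log t := by ring
    have hkey : (t - 1) - Real.log t ≤ Real.log t * (t - 1) := by linarith
    have h1 : 1/(t-1) ≤ 1/Real.log t := one_div_le_one_div_of_le hapos hab
    have h2 : 1/Real.log t - 1/(t-1) ≤ 1 := by
      rw [show 1/Real.log t - 1/(t-1)
          = ((t-1) - Real.log t)/(Real.log t * (t-1)) by
        field_simp, div_le_one (mul_pos hapos hbpos)]
      linarith
    rw [h, abs_le]
    constructor <;> linarith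

lemma h_meas : Measurable h :=
  (measurable_const.div Real.measurable_log).sub
    (measurable_const.div (measurable_id.sub measurable_const))

lemma h_integrableOn : IntegrableOn h (Set.Icc (0:ℝ) 2) volume := by
  apply Measure.integrableOn_of_bounded (M := 4)
  · exact (measure_Icc_lt_top).ne
  · exact h_meas.aestronglyMeasurable
  · refine (ae_restrict_iff' measurableSet_Icc).2 (ae_of_all _ (fun t ht => ?_))
    rw [Real.norm_eq_abs]
    exact h_bound t ht

lemma h_ii {a b : ℝ} (ha : a ∈ Set.Icc (0:ℝ) 2) (hb : b ∈ Set.Icc (0:ℝ) 2) :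
    IntervalIntegrable h volume a b := by
  rw [intervalIntegrable_iff]
  exact h_integrableOn.mono_set
    ((Set.uIoc_subset_uIcc).trans (Set.uIcc_subset_Icc ha hb))

lemma ii_log {a b : ℝ} (ha : 1 < a) (hb : 1 < b) :
    IntervalIntegrable (fun t => 1 / Real.log t) volume a b := by
  apply ContinuousOn.intervalIntegrable
  intro t ht
  have h1t : 1 < t := lt_of_lt_of_le (lt_min ha hb) ht.1
  exact ContinuousWithinAt.div continuousWithinAt_const
    (Real.continuousAt_log (by linarith)).continuousWithinAt
    (ne_of_gt (Real.log_pos h1t))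

lemma ii_inv_sub_one {a b : ℝ} (hab : ∀ t ∈ Set.uIcc a b, t ≠ 1) :
    IntervalIntegrable (fun t => 1 / (t - 1)) volume a b := by
  apply ContinuousOn.intervalIntegrable
  intro t ht
  exact ContinuousWithinAt.div continuousWithinAt_const
    ((continuous_id.sub continuous_const).continuousWithinAt)
    (sub_ne_zero.2 (hab t ht))

lemma integral_left {ε : ℝ} (h0 : 0 < ε) (h1 : ε < 1) :
    ∫ t in (0:ℝ)..(1-ε), 1 / (t-1) = Real.log ε := by
  have key : ∀ t ∈ Set.uIcc (0:ℝ) (1-ε), HasDerivAt (fun u => Real.log (1 - u)) (1/(t-1)) t := by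
    intro t ht
    rw [Set.uIcc_of_le (by linarith)] at ht
    have htlt : t ≤ 1 - ε := ht.2
    have h1t : (1:ℝ) - t ≠ 0 := by intro hc; linarith
    have d1 : HasDerivAt (fun u : ℝ => 1 - u) (-1) t := by
      simpa using (hasDerivAt_id t).const_sub 1
    have h' : HasDerivAt (fun u => Real.log (1 - u)) ((1 - t)⁻¹ * (-1)) t := by
      simpa [Function.comp_def] using (Real.hasDerivAt_log h1t).comp t d1
    have heq : (1 - t)⁻¹ * (-1) = 1 / (t - 1) := by
      rw [one_div, show t - 1 = -(1 - t) by ring, inv_neg]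
      ring
    exact heq ▸ h'
  have hint : IntervalIntegrable (fun t => 1/(t-1)) volume 0 (1-ε) := by
    apply ii_inv_sub_one
    intro t ht
    rw [Set.uIcc_of_le (by linarith)] at ht
    intro hc; rw [hc] at ht; linarith [ht.2]
  have := intervalIntegral.integral_eq_sub_of_hasDerivAt key hint
  rw [this]
  norm_num

lemma integral_right {ε : ℝ} (h0 : 0 < ε) (h1 : ε < 1) :
    ∫ t in (1+ε:ℝ)..2, 1 / (t-1) = -Real.log ε := by
  have key : ∀ t ∈ Set.uIcc (1+ε:ℝ) 2, HasDerivAt (fun u => Real.log (u - 1)) (1/(t-1)) t := by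
    intro t ht
    rw [Set.uIcc_of_le (by linarith)] at ht
    have h1t : t - 1 ≠ 0 := by have := ht.1; intro hc; nlinarith
    have d1 : HasDerivAt (fun u : ℝ => u - 1) 1 t := by
      simpa using (hasDerivAt_id t).sub_const 1
    have h' : HasDerivAt (fun u => Real.log (u - 1)) ((t - 1)⁻¹ * 1) t := by
      simpa [Function.comp_def] using (Real.hasDerivAt_log h1t).comp t d1
    have heq : (t - 1)⁻¹ * 1 = 1 / (t - 1) := by rw [mul_one, one_div]
    exact heq ▸ h'
  have hint : IntervalIntegrable (fun t => 1/(t-1)) volume (1+ε) 2 := by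
    apply ii_inv_sub_one
    intro t ht
    rw [Set.uIcc_of_le (by linarith)] at ht
    intro hc; rw [hc] at ht; linarith [ht.1]
  have := intervalIntegral.integral_eq_sub_of_hasDerivAt key hint
  rw [this, show (2:ℝ) - 1 = 1 by norm_num, show (1:ℝ) + ε - 1 = ε by ring, Real.log_one]
  ring

/-- The constant `li 2`. -/
noncomputable def Lc : ℝ := (∫ t in (0:ℝ)..1, h t) + ∫ t in (1:ℝ)..2, h t

lemma tendsto_F2 :
    Tendsto (fun ε : ℝ => (∫ t in (0:ℝ)..(1-ε), 1 / Real.log t)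
      + ∫ t in (1+ε:ℝ)..2, 1 / Real.log t) (𝓝[>] (0:ℝ)) (𝓝 Lc) := by
  have huicc : Set.uIcc (0:ℝ) 2 = Set.Icc 0 2 := Set.uIcc_of_le (by norm_num)
  have hio : IntegrableOn h (Set.uIcc (0:ℝ) 2) volume := by rw [huicc]; exact h_integrableOn
  have hPhi : ContinuousOn (fun x => ∫ t in (0:ℝ)..x, h t) (Set.uIcc (0:ℝ) 2) :=
    intervalIntegral.continuousOn_primitive_interval hio
  have hPsi : ContinuousOn (fun x => ∫ t in x..(2:ℝ), h t) (Set.uIcc (0:ℝ) 2) :=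
    intervalIntegral.continuousOn_primitive_interval_left hio
  have hmem : Set.Ioo (0:ℝ) 1 ∈ 𝓝[>] (0:ℝ) := Ioo_mem_nhdsGT_of_mem ⟨le_refl 0, one_pos⟩
  have h1mem : (1:ℝ) ∈ Set.uIcc (0:ℝ) 2 := by rw [huicc]; constructor <;> norm_num
  have t1 : Tendsto (fun ε : ℝ => 1 - ε) (𝓝[>] (0:ℝ)) (𝓝[Set.uIcc (0:ℝ) 2] 1) := by
    rw [tendsto_nhdsWithin_iff]
    constructor
    · have : Tendsto (fun ε : ℝ => 1 - ε) (𝓝 0) (𝓝 1) := by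
        have := (continuous_const.sub continuous_id (f := fun ε : ℝ => (1:ℝ))).tendsto (0:ℝ)
        simpa [Pi.sub_def] using this
      exact this.mono_left nhdsWithin_le_nhds
    · filter_upwards [hmem] with ε hε
      rw [huicc]
      exact ⟨by linarith [hε.2], by linarith [hε.1]⟩
  have t2 : Tendsto (fun ε : ℝ => 1 + ε) (𝓝[>] (0:ℝ)) (𝓝[Set.uIcc (0:ℝ) 2] 1) := by
    rw [tendsto_nhdsWithin_iff]
    constructor
    · have : Tendsto (fun ε : ℝ => 1 + ε) (𝓝 0) (𝓝 1) := by
        have := (continuous_const.add continuous_id (f := fun ε : ℝ => (1:ℝ))).tendsto (0:ℝ)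
        simpa [Pi.add_def] using this
      exact this.mono_left nhdsWithin_le_nhds
    · filter_upwards [hmem] with ε hε
      rw [huicc]
      exact ⟨by linarith [hε.1], by linarith [hε.2]⟩
  have A := (hPhi 1 h1mem).tendsto.comp t1
  have B := (hPsi 1 h1mem).tendsto.comp t2
  have := A.add B
  apply this.congr'
  filter_upwards [hmem] with ε hε
  have hmem1 : (1 - ε : ℝ) ∈ Set.Icc (0:ℝ) 2 := ⟨by linarith [hε.2], by linarith [hε.1]⟩
  have hmem2 : (1 + ε : ℝ) ∈ Set.Icc (0:ℝ) 2 := ⟨by linarith [hε.1], by linarith [hε.2]⟩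
  have h0mem : (0:ℝ) ∈ Set.Icc (0:ℝ) 2 := by constructor <;> norm_num
  have h2mem : (2:ℝ) ∈ Set.Icc (0:ℝ) 2 := by constructor <;> norm_num
  have e1 : ∫ t in (0:ℝ)..(1-ε), 1 / Real.log t
      = (∫ t in (0:ℝ)..(1-ε), h t) + Real.log ε := by
    have hi1 : IntervalIntegrable h volume 0 (1-ε) := h_ii h0mem hmem1
    have hi2 : IntervalIntegrable (fun t => 1/(t-1)) volume 0 (1-ε) := by
      apply ii_inv_sub_one
      intro t ht
      rw [Set.uIcc_of_le (by linarith [hε.2])] at ht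
      intro hc; rw [hc] at ht; linarith [ht.2, hε.1]
    rw [show (∫ t in (0:ℝ)..(1-ε), 1 / Real.log t)
        = ∫ t in (0:ℝ)..(1-ε), (h t + 1/(t-1)) from by
      congr 1; funext t; simp [h]]
    rw [intervalIntegral.integral_add hi1 hi2, integral_left hε.1 hε.2]
  have e2 : ∫ t in (1+ε:ℝ)..2, 1 / Real.log t
      = (∫ t in (1+ε:ℝ)..2, h t) + (-Real.log ε) := by
    have hi1 : IntervalIntegrable h volume (1+ε) 2 := h_ii hmem2 h2mem
    have hi2 : IntervalIntegrable (fun t => 1/(t-1)) volume (1+ε) 2 := by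
      apply ii_inv_sub_one
      intro t ht
      rw [Set.uIcc_of_le (by linarith [hε.2])] at ht
      intro hc; rw [hc] at ht; linarith [ht.1, hε.1]
    rw [show (∫ t in (1+ε:ℝ)..2, 1 / Real.log t)
        = ∫ t in (1+ε:ℝ)..2, (h t + 1/(t-1)) from by
      congr 1; funext t; simp [h]]
    rw [intervalIntegral.integral_add hi1 hi2, integral_right hε.1 hε.2]
  simp only [Function.comp]
  rw [e1, e2]
  ring

lemma li_eq {x : ℝ} (hx : 2 ≤ x) : li x = Lc + ∫ t in (2:ℝ)..x, 1 / Real.log t := by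
  have hmem : Set.Ioo (0:ℝ) 1 ∈ 𝓝[>] (0:ℝ) := Ioo_mem_nhdsGT_of_mem ⟨le_refl 0, one_pos⟩
  have key : Tendsto (fun ε : ℝ => (∫ t in (0:ℝ)..(1-ε), 1 / Real.log t)
      + ∫ t in (1+ε:ℝ)..x, 1 / Real.log t) (𝓝[>] (0:ℝ))
      (𝓝 (Lc + ∫ t in (2:ℝ)..x, 1 / Real.log t)) := by
    have hadd := tendsto_F2.add_const (∫ t in (2:ℝ)..x, 1 / Real.log t)
    apply hadd.congr'
    filter_upwards [hmem] with ε hε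
    have i1 : IntervalIntegrable (fun t => 1 / Real.log t) volume (1+ε) 2 :=
      ii_log (by linarith [hε.1]) (by norm_num)
    have i2 : IntervalIntegrable (fun t => 1 / Real.log t) volume 2 x :=
      ii_log one_lt_two (by linarith)
    rw [← intervalIntegral.integral_add_adjacent_intervals i1 i2]
    ring
  rw [li, pvLogInt]
  simp only [pow_one]
  exact key.limUnder_eq

/-- `H_k - γ`. -/
noncomputable def Hg (k : ℕ) : ℝ :=
  (∑ j ∈ Finset.Icc 1 k, (1:ℝ)/j) - Real.eulerMascheroniConstant

lemma hsum (k : ℕ) : ((harmonic k : ℚ) : ℝ) = ∑ j ∈ Finset.Icc 1 k, (1:ℝ)/j := by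
  rw [harmonic_eq_sum_Icc]
  push_cast
  simp [one_div]

lemma Hg_gt {k : ℕ} (hk : 1 ≤ k) : Real.log k < Hg k := by
  have h := Real.eulerMascheroniConstant_lt_eulerMascheroniSeq' k
  rw [Real.eulerMascheroniSeq', if_neg (by omega)] at h
  rw [Hg, ← hsum]
  linarith

lemma Hg_lt (k : ℕ) : Hg k < Real.log ((k:ℝ)+1) := by
  have h := Real.eulerMascheroniSeq_lt_eulerMascheroniConstant k
  rw [Real.eulerMascheroniSeq] at h
  rw [Hg, ← hsum]
  linarith

/-- The summand `∫_k^{k+1} dt/log t − 1/(H_k − γ)`. -/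
noncomputable def d (k : ℕ) : ℝ :=
  (∫ t in (k:ℝ)..((k:ℝ)+1), 1 / Real.log t) - 1 / Hg k

lemma d_bound {k : ℕ} (hk : 2 ≤ k) :
    |d k| ≤ 1 / Real.log k - 1 / Real.log ((k:ℝ)+1) := by
  have hk2 : (2:ℝ) ≤ (k:ℝ) := by exact_mod_cast hk
  have hL2 : 0 < Real.log k := Real.log_pos (by linarith)
  have hL3 : Real.log (k:ℝ) < Real.log ((k:ℝ)+1) :=
    Real.log_lt_log (by linarith) (by linarith)
  have hii : IntervalIntegrable (fun t => 1 / Real.log t) volume (k:ℝ) ((k:ℝ)+1) :=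
    ii_log (by linarith) (by linarith)
  have hIub : (∫ t in (k:ℝ)..((k:ℝ)+1), 1 / Real.log t) ≤ 1 / Real.log k := by
    have := intervalIntegral.integral_mono_on (by linarith : (k:ℝ) ≤ (k:ℝ)+1) hii
      (intervalIntegrable_const (c := 1 / Real.log k))
      (fun t ht => one_div_le_one_div_of_le hL2
        (Real.log_le_log (by linarith) ht.1))

    simpa using this
  have hIlb : 1 / Real.log ((k:ℝ)+1) ≤ ∫ t in (k:ℝ)..((k:ℝ)+1), 1 / Real.log t := by
    have := intervalIntegral.integral_mono_on (by linarith : (k:ℝ) ≤ (k:ℝ)+1)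
      (intervalIntegrable_const (c := 1 / Real.log ((k:ℝ)+1))) hii
      (fun t ht => one_div_le_one_div_of_le (Real.log_pos (by linarith [ht.1]))
        (Real.log_le_log (by linarith [ht.1]) ht.2))
    simpa using this
  have hA1 := Hg_gt (show 1 ≤ k by omega)
  have hA2 := Hg_lt k
  have hApos : 0 < Hg k := lt_trans hL2 hA1
  have hq1 : 1 / Real.log ((k:ℝ)+1) < 1 / Hg k := one_div_lt_one_div_of_lt hApos hA2
  have hq2 : 1 / Hg k < 1 / Real.log k := one_div_lt_one_div_of_lt hL2 hA1
  rw [abs_le, d]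
  constructor <;> linarith

lemma summable_d : Summable (fun i : ℕ => d (i + 2)) := by
  rw [← summable_abs_iff]
  apply summable_of_sum_range_le (c := 1 / Real.log 2) (fun n => abs_nonneg _)
  intro n
  have hbd : ∀ i : ℕ, |d (i+2)|
      ≤ 1 / Real.log ((i:ℝ)+2) - 1 / Real.log (((i+1:ℕ):ℝ)+2) := by
    intro i
    have h := d_bound (k := i+2) (by omega)
    push_cast at h
    have e : ((i:ℝ)+2)+1 = ((i+1:ℕ):ℝ)+2 := by push_cast; ring
    rw [← e]
    exact h
  calc ∑ i ∈ Finset.range n, |d (i+2)|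
      ≤ ∑ i ∈ Finset.range n,
        ((fun j : ℕ => 1 / Real.log ((j:ℝ)+2)) i
          - (fun j : ℕ => 1 / Real.log ((j:ℝ)+2)) (i+1)) :=
        Finset.sum_le_sum (fun i _ => hbd i)
    _ = 1 / Real.log (((0:ℕ):ℝ)+2) - 1 / Real.log (((n:ℕ):ℝ)+2) :=
        Finset.sum_range_sub' (fun j : ℕ => 1 / Real.log ((j:ℝ)+2)) n
    _ ≤ 1 / Real.log 2 := by
        have hn : (0:ℝ) ≤ (n:ℝ) := Nat.cast_nonneg n
        have hpos : 0 < Real.log ((n:ℝ)+2) := Real.log_pos (by linarith)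
        have h0 : (0:ℝ) ≤ 1 / Real.log ((n:ℝ)+2) := by positivity
        simp only [Nat.cast_zero, zero_add]
        linarith

end LiAux

theorem li_sub_harmonicSum_tendsto :
    ∃ L : ℝ, Tendsto (fun n : ℕ =>
        li n - ∑ k ∈ Finset.Icc 1 n,
          1 / ((∑ j ∈ Finset.Icc 1 k, (1 : ℝ) / j) - Real.eulerMascheroniConstant))
      atTop (𝓝 L) := by
  obtain ⟨S, hS⟩ : ∃ S, HasSum (fun i : ℕ => LiAux.d (i+2)) S := ⟨_, LiAux.summable_d.hasSum⟩
  refine ⟨LiAux.Lc + S - 1 / LiAux.Hg 1, ?_⟩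
  have hT : Tendsto (fun m : ℕ => ∑ i ∈ Finset.range m, LiAux.d (i+2)) atTop (𝓝 S) :=
    hS.tendsto_sum_nat
  have hT2 : Tendsto (fun n : ℕ => ∑ i ∈ Finset.range (n-2), LiAux.d (i+2)) atTop (𝓝 S) :=
    hT.comp (tendsto_sub_atTop_nat 2)
  have hq : Tendsto (fun n : ℕ => 1 / LiAux.Hg n) atTop (𝓝 0) := by
    have h1 : Tendsto (fun n : ℕ => LiAux.Hg n) atTop atTop := by
      apply tendsto_atTop_mono' atTop ?_
        (Real.tendsto_log_atTop.comp tendsto_natCast_atTop_atTop)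
      filter_upwards [eventually_ge_atTop 1] with n hn
      exact (LiAux.Hg_gt hn).le
    simpa [one_div, Pi.inv_def] using h1.inv_tendsto_atTop
  have hmain : Tendsto (fun n : ℕ =>
      LiAux.Lc + (∑ i ∈ Finset.range (n-2), LiAux.d (i+2)) - 1 / LiAux.Hg 1 - 1 / LiAux.Hg n)
      atTop (𝓝 (LiAux.Lc + S - 1 / LiAux.Hg 1 - 0)) :=
    ((tendsto_const_nhds.add hT2).sub tendsto_const_nhds).sub hq
  rw [sub_zero] at hmain
  apply hmain.congr'
  filter_upwards [eventually_ge_atTop 3] with n hn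
  obtain ⟨m, rfl⟩ : ∃ m, n = m + 3 := ⟨n - 3, by omega⟩
  have hHg : ∀ k : ℕ, (1:ℝ) / ((∑ j ∈ Finset.Icc 1 k, (1:ℝ)/j)
      - Real.eulerMascheroniConstant) = 1 / LiAux.Hg k := fun _ => rfl
  simp only [hHg]
  have hnr : (2:ℝ) ≤ ((m+3:ℕ):ℝ) := by
    push_cast; linarith [Nat.cast_nonneg (α := ℝ) m]
  have hli : li ((m+3:ℕ):ℝ) = LiAux.Lc + ∫ t in (2:ℝ)..((m+3:ℕ):ℝ), 1 / Real.log t :=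
    LiAux.li_eq hnr
  have hd : ∀ i : ℕ, LiAux.d (i+2)
      = (∫ t in ((i:ℝ)+2)..((i:ℝ)+2+1), 1 / Real.log t) - 1 / LiAux.Hg (i+2) := by
    intro i
    have e : ((i+2:ℕ):ℝ) = (i:ℝ)+2 := by push_cast; ring
    rw [LiAux.d, e]
  have hsum_d : ∑ i ∈ Finset.range (m+1), LiAux.d (i+2)
      = (∑ i ∈ Finset.range (m+1), ∫ t in ((i:ℝ)+2)..((i:ℝ)+2+1), 1 / Real.log t)
        - ∑ i ∈ Finset.range (m+1), 1 / LiAux.Hg (i+2) := by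
    rw [← Finset.sum_sub_distrib]
    exact Finset.sum_congr rfl (fun i _ => hd i)
  have hsplit : (∫ t in (2:ℝ)..((m+3:ℕ):ℝ), 1 / Real.log t)
      = ∑ i ∈ Finset.range (m+1), ∫ t in ((i:ℝ)+2)..((i:ℝ)+2+1), 1 / Real.log t := by
    have key : ∑ k ∈ Finset.range (m+1),
          ∫ t in (((k:ℕ):ℝ)+2)..(((k+1:ℕ):ℝ)+2), 1 / Real.log t
        = ∫ t in (((0:ℕ):ℝ)+2)..(((m+1:ℕ):ℝ)+2), 1 / Real.log t :=
      intervalIntegral.sum_integral_adjacent_intervals (μ := volume)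
        (a := fun i : ℕ => (i:ℝ)+2) (n := m+1) (f := fun t => 1 / Real.log t)
        (fun k _ => by
          have h0 : (0:ℝ) ≤ (k:ℝ) := Nat.cast_nonneg k
          show IntervalIntegrable _ volume ((k:ℝ)+2) (((k+1:ℕ):ℝ)+2)
          exact LiAux.ii_log (by linarith) (by push_cast; linarith))
    have e0 : (((0:ℕ):ℝ)+2) = (2:ℝ) := by norm_num
    have e1 : (((m+1:ℕ):ℝ)+2) = ((m+3:ℕ):ℝ) := by push_cast; ring
    rw [e0, e1] at key
    rw [← key]
    exact Finset.sum_congr rfl (fun k _ => by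
      have e2 : (((k+1:ℕ)):ℝ)+2 = (k:ℝ)+2+1 := by push_cast; ring
      rw [e2])
  have hIcc : ∑ k ∈ Finset.Icc 1 (m+3), (1:ℝ) / LiAux.Hg k
      = 1 / LiAux.Hg 1 + (∑ i ∈ Finset.range (m+1), 1 / LiAux.Hg (i+2))
        + 1 / LiAux.Hg (m+3) := by
    rw [← Finset.Ico_add_one_right_eq_Icc, Finset.sum_Ico_eq_sum_range]
    have e : m+3+1-1 = (m+2)+1 := by omega
    rw [e, Finset.sum_range_succ, Finset.sum_range_succ']
    have e4 : (1:ℕ)+(m+2) = m+3 := by omega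
    rw [e4]
    have e5 : ∑ i ∈ Finset.range (m+1), (1:ℝ) / LiAux.Hg (1+(i+1))
        = ∑ i ∈ Finset.range (m+1), (1:ℝ) / LiAux.Hg (i+2) :=
      Finset.sum_congr rfl (fun i _ => by rw [show 1+(i+1) = i+2 from by omega])
    rw [e5, show (1:ℕ)+0 = 1 from rfl]
    ring
  rw [show m+3-2 = m+1 from by omega, hli, hsplit, hsum_d, hIcc]
  ring
end

section
/- For all integers k ≥ 2, 0 < 1/log k − 1/(H_k − γ) < 1/(2k (log k)^2), and consequently the series ∑_{k=2}^∞ (1/log k − 1/(H_k − γ)) converges. -/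
open Real Filter Topology

/-- Key analytic inequality: `log (1+x) - log (1-x) < 2x/(1-x²)` for `0 < x < 1`. -/
lemma key_log_ineq : ∀ x ∈ Set.Ioo (0:ℝ) 1,
    Real.log (1+x) - Real.log (1-x) < 2*x/(1-x^2) := by
  set g : ℝ → ℝ := fun y => 2*y/(1-y^2) - Real.log (1+y) + Real.log (1-y) with hg
  have hmono : StrictMonoOn g (Set.Ico (0:ℝ) 1) := by
    apply strictMonoOn_of_deriv_pos (convex_Ico 0 1)
    · apply ContinuousOn.add
      apply ContinuousOn.sub
      · exact ContinuousOn.div (by fun_prop) (by fun_prop) (fun y hy => by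
          simp only [Set.mem_Ico] at hy; nlinarith [hy.1, hy.2])
      · exact ContinuousOn.log (by fun_prop) (fun y hy => by
          simp only [Set.mem_Ico] at hy; nlinarith [hy.1, hy.2])
      · exact ContinuousOn.log (by fun_prop) (fun y hy => by
          simp only [Set.mem_Ico] at hy; nlinarith [hy.1, hy.2])
    · intro y hy
      rw [interior_Ico] at hy
      obtain ⟨hy0, hy1⟩ := hy
      have h1 : (1:ℝ) - y^2 ≠ 0 := by nlinarith
      have h2 : (1:ℝ) + y > 0 := by linarith
      have h3 : (1:ℝ) - y > 0 := by linarith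
      have hd : HasDerivAt g ((2*(1-y^2) - 2*y*(-(2*y)))/(1-y^2)^2 - 1/(1+y) + (-1)/(1-y)) y := by
        have d1 : HasDerivAt (fun y:ℝ => 2*y/(1-y^2))
            ((2*(1-y^2) - 2*y*(-(2*y)))/(1-y^2)^2) y := by
          exact HasDerivAt.div (by simpa using (hasDerivAt_id y).const_mul 2)
            (by simpa using ((hasDerivAt_id y).pow 2).const_sub 1) h1
        have d2 : HasDerivAt (fun y:ℝ => Real.log (1+y)) (1/(1+y)) y := by
          have := (Real.hasDerivAt_log h2.ne').comp y ((hasDerivAt_id y).const_add 1)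
          simpa [one_div, Function.comp_def] using this
        have d3 : HasDerivAt (fun y:ℝ => Real.log (1-y)) ((-1)/(1-y)) y := by
          have := (Real.hasDerivAt_log h3.ne').comp y ((hasDerivAt_id y).const_sub 1)
          simpa [div_eq_mul_inv, Function.comp_def] using this
        exact (d1.sub d2).add d3
      rw [hd.deriv]
      have : (2*(1-y^2) - 2*y*(-(2*y)))/(1-y^2)^2 - 1/(1+y) + (-1)/(1-y)
          = 4*y^2/(1-y^2)^2 := by
        field_simp
        ring
      rw [this]
      positivity
  intro x hx
  obtain ⟨hx0, hx1⟩ := hx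
  have h := hmono (Set.mem_Ico.2 ⟨le_refl 0, one_pos⟩) (Set.mem_Ico.2 ⟨hx0.le, hx1⟩) hx0
  simp only [hg] at h
  norm_num at h
  linarith

/-- Trapezoid-type inequality for log, in real form. -/
lemma log_succ_lt (K : ℝ) (hK : 1 ≤ K) :
    Real.log (K+1) - Real.log K < 1/(K+1) + 1/(2*K) - 1/(2*(K+1)) := by
  have hK0 : (0:ℝ) < K := by linarith
  have hx : (1:ℝ)/(2*K+1) ∈ Set.Ioo (0:ℝ) 1 := by
    constructor
    · positivity
    · rw [div_lt_one (by linarith)]; linarith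
  have hkey := key_log_ineq _ hx
  have h2K1 : (2*K+1 : ℝ) ≠ 0 := by positivity
  have e1 : (1:ℝ) + 1/(2*K+1) = (2*K+2)/(2*K+1) := by field_simp; ring
  have e2 : (1:ℝ) - 1/(2*K+1) = (2*K)/(2*K+1) := by field_simp; ring
  have hx2 : (1:ℝ) - (1/(2*K+1))^2 ≠ 0 := by
    have : (1/(2*K+1))^2 < 1 := by
      rw [div_pow, one_pow, div_lt_one (by positivity)]
      nlinarith
    linarith
  have e3 : Real.log (1+1/(2*K+1)) - Real.log (1-1/(2*K+1))
      = Real.log (K+1) - Real.log K := by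
    rw [e1, e2, Real.log_div (by linarith) h2K1,
      Real.log_div (by linarith) h2K1,
      show (2*K+2 : ℝ) = 2*(K+1) by ring,
      Real.log_mul (by norm_num) (by linarith), Real.log_mul (by norm_num) (by linarith)]
    ring
  have e4 : 2*(1/(2*K+1))/(1-(1/(2*K+1))^2)
      = 1/(K+1) + 1/(2*K) - 1/(2*(K+1)) := by
    rw [div_eq_iff hx2]
    field_simp
    ring
  rw [e3, e4] at hkey
  exact hkey

/-- The sequence `harmonic k - log k - 1/(2k)`. -/
noncomputable def cSeq (k : ℕ) : ℝ := (harmonic k : ℝ) - Real.log k - 1/(2*k)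

lemma cSeq_step {k : ℕ} (hk : 1 ≤ k) : cSeq k < cSeq (k+1) := by
  have hK : (1:ℝ) ≤ (k:ℝ) := by exact_mod_cast hk
  have hkey := log_succ_lt (k:ℝ) hK
  simp only [cSeq, harmonic_succ]
  push_cast
  rw [show ((k:ℝ)+1)⁻¹ = 1/((k:ℝ)+1) by rw [inv_eq_one_div]]
  linarith

lemma cSeq_mono : ∀ m : ℕ, 1 ≤ m → ∀ n : ℕ, m ≤ n → cSeq m ≤ cSeq n := by
  intro m hm n hn
  induction n, hn using Nat.le_induction with
  | base => exact le_rfl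
  | succ n hmn ih => exact ih.trans (cSeq_step (hm.trans hmn)).le

lemma cSeq_tendsto : Tendsto cSeq atTop (nhds Real.eulerMascheroniConstant) := by
  have h1 : Tendsto (fun n : ℕ => 1/(2*(n:ℝ))) atTop (nhds 0) := by
    have h2 := tendsto_one_div_atTop_nhds_zero_nat.const_mul (1/2 : ℝ)
    simp only [mul_zero] at h2
    apply h2.congr
    intro n
    rw [one_div, one_div, one_div, ← mul_inv]
  have h3 := Real.tendsto_harmonic_sub_log.sub h1
  rw [sub_zero] at h3
  exact h3.congr (fun n => by simp only [cSeq])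

lemma cSeq_lt_gamma {k : ℕ} (hk : 1 ≤ k) : cSeq k < Real.eulerMascheroniConstant := by
  refine (cSeq_step hk).trans_le ?_
  apply ge_of_tendsto cSeq_tendsto
  filter_upwards [eventually_ge_atTop (k+1)] with n hn
  exact cSeq_mono (k+1) (by omega) n hn

theorem log_inv_sub_harmonic_inv_bounds :
    (∀ k : ℕ, 2 ≤ k →
      0 < 1 / Real.log k
          - 1 / ((∑ j ∈ Finset.Icc 1 k, (1 : ℝ) / j) - Real.eulerMascheroniConstant) ∧
      1 / Real.log k
          - 1 / ((∑ j ∈ Finset.Icc 1 k, (1 : ℝ) / j) - Real.eulerMascheroniConstant)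
        < 1 / (2 * k * (Real.log k) ^ 2)) ∧
    Summable (fun k : ℕ =>
      1 / Real.log (k + 2)
        - 1 / ((∑ j ∈ Finset.Icc 1 (k + 2), (1 : ℝ) / j) - Real.eulerMascheroniConstant)) := by
  have hHsum : ∀ k : ℕ, (∑ j ∈ Finset.Icc 1 k, (1 : ℝ) / j) = (harmonic k : ℝ) := by
    intro k
    rw [harmonic_eq_sum_Icc]
    push_cast
    simp [one_div]
  have main : ∀ k : ℕ, 2 ≤ k →
      0 < 1 / Real.log k
          - 1 / ((∑ j ∈ Finset.Icc 1 k, (1 : ℝ) / j) - Real.eulerMascheroniConstant) ∧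
      1 / Real.log k
          - 1 / ((∑ j ∈ Finset.Icc 1 k, (1 : ℝ) / j) - Real.eulerMascheroniConstant)
        < 1 / (2 * k * (Real.log k) ^ 2) := by
    intro k hk
    rw [hHsum k]
    have hK2 : (2:ℝ) ≤ (k:ℝ) := by exact_mod_cast hk
    have hL : 0 < Real.log k := Real.log_pos (by exact_mod_cast (by omega : 1 < k))
    have hd0 : Real.eulerMascheroniConstant < (harmonic k : ℝ) - Real.log k := by
      have h := Real.eulerMascheroniConstant_lt_eulerMascheroniSeq' k
      rwa [Real.eulerMascheroniSeq', if_neg (by omega : k ≠ 0)] at h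
    set L : ℝ := Real.log k with hLdef
    set d : ℝ := (harmonic k : ℝ) - Real.eulerMascheroniConstant - L with hddef
    have hd : 0 < d := by simp only [hddef]; linarith
    have hdu : d < 1/(2*(k:ℝ)) := by
      have := cSeq_lt_gamma (k := k) (by omega)
      simp only [cSeq, ← hLdef] at this
      simp only [hddef]
      linarith
    have hHe : (harmonic k : ℝ) - Real.eulerMascheroniConstant = L + d := by
      simp only [hddef]; ring
    rw [hHe]
    constructor
    · have : 1/(L+d) < 1/L := by
        apply one_div_lt_one_div_of_lt hL
        linarith
      linarith
    · have hLd : 0 < L + d := by linarith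
      have heq : 1/L - 1/(L+d) = d/(L*(L+d)) := by
        field_simp
        ring
      rw [heq]
      rw [div_lt_div_iff₀ (by positivity) (by positivity)]
      have h2kd : d * (2*(k:ℝ)) < 1 := by
        rwa [lt_div_iff₀ (by positivity)] at hdu
      -- goal: d * (2*k*L^2) < 1 * (L*(L+d))
      nlinarith [mul_pos hL hd, mul_pos (mul_pos hL hL) hd,
        mul_lt_mul_of_pos_right h2kd (mul_pos hL hL)]
  refine ⟨main, ?_⟩
  rw [← summable_nat_add_iff 1]
  set T : ℕ → ℝ := fun n => 1 / Real.log (n + 2) with hT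
  have hTanti : ∀ n : ℕ, 0 ≤ T n - T (n+1) := by
    intro n
    have h1 : (0:ℝ) < Real.log ((n:ℝ)+2) := Real.log_pos (by push_cast; linarith)
    have h2 : Real.log ((n:ℝ)+2) ≤ Real.log ((n:ℝ)+1+2) :=
      Real.log_le_log (by positivity) (by linarith)
    have h3 : 1/Real.log ((n:ℝ)+1+2) ≤ 1/Real.log ((n:ℝ)+2) :=
      one_div_le_one_div_of_le h1 h2
    simp only [hT]
    push_cast
    linarith
  have hTsum : Summable (fun n : ℕ => T n - T (n+1)) := by
    apply summable_of_sum_range_le (c := T 0) (fun n => hTanti n)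
    intro n
    rw [Finset.sum_range_sub' (fun i => T i)]
    have h1 : (0:ℝ) < Real.log ((n:ℝ)+2) := Real.log_pos (by push_cast; linarith)
    have : 0 ≤ T n := by simp only [hT]; push_cast; positivity
    linarith
  apply Summable.of_nonneg_of_le _ _ hTsum
  · intro k
    have h := (main (k+1+2) (by omega)).1
    have hc : ((k+1+2:ℕ):ℝ) = (k:ℝ)+1+2 := by push_cast; ring
    rw [hc, hHsum (k+1+2)] at h
    push_cast
    rw [hHsum (k+1+2)]
    push_cast
    linarith
  · intro k
    have hub := (main (k+1+2) (by omega)).2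
    have hc : ((k+1+2:ℕ):ℝ) = (k:ℝ)+1+2 := by push_cast; ring
    rw [hc, hHsum (k+1+2)] at hub
    have key2 : 1 / (2 * ((k:ℝ)+1+2) * (Real.log ((k:ℝ)+1+2)) ^ 2) ≤ T k - T (k+1) := by
      have hL1p : 0 < Real.log ((k:ℝ)+2) := Real.log_pos (by push_cast; linarith)
      set L1 : ℝ := Real.log ((k:ℝ)+2) with hL1
      have hL12 : L1 ≤ Real.log ((k:ℝ)+3) :=
        Real.log_le_log (by positivity) (by linarith)
      set L2 : ℝ := Real.log ((k:ℝ)+3) with hL2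
      have hL2p : 0 < L2 := lt_of_lt_of_le hL1p hL12
      have hdiff : 1/((k:ℝ)+3) < L2 - L1 := by
        rw [hL1, hL2, ← Real.log_div (by positivity) (by positivity)]
        have h := Real.log_lt_sub_one_of_pos
          (show (0:ℝ) < ((k:ℝ)+2)/((k:ℝ)+3) by positivity)
          (by
            intro hcon
            rw [div_eq_one_iff_eq (by positivity)] at hcon
            linarith)
        have hrw : Real.log (((k:ℝ)+3)/((k:ℝ)+2)) = -Real.log (((k:ℝ)+2)/((k:ℝ)+3)) := by
          rw [← Real.log_inv, inv_div]
        rw [hrw]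
        have harith : (((k:ℝ)+2)/((k:ℝ)+3) - 1) = -(1/((k:ℝ)+3)) := by
          field_simp
          norm_num
        linarith
      have hTk : T k - T (k+1) = (L2 - L1)/(L1*L2) := by
        simp only [hT]
        push_cast
        rw [show ((k:ℝ)+1+2) = (k:ℝ)+3 by ring, ← hL1, ← hL2]
        field_simp
      rw [hTk, show ((k:ℝ)+1+2) = (k:ℝ)+3 by ring, ← hL2]
      rw [div_le_div_iff₀ (by positivity) (by positivity)]
      have h2 : (1/((k:ℝ)+3)) * (2*((k:ℝ)+3)*L2^2) ≤ (L2-L1) * (2*((k:ℝ)+3)*L2^2) :=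
        mul_le_mul_of_nonneg_right hdiff.le (by positivity)
      have h3 : (1/((k:ℝ)+3)) * (2*((k:ℝ)+3)*L2^2) = 2*L2^2 := by
        field_simp
      nlinarith [mul_pos hL1p hL2p, mul_le_mul_of_nonneg_right hL12 hL2p.le]
    have goalrw : (1:ℝ) / Real.log ((k+1:ℕ) + 2)
        - 1 / ((∑ j ∈ Finset.Icc 1 ((k+1:ℕ) + 2), (1 : ℝ) / j)
            - Real.eulerMascheroniConstant)
        = 1 / Real.log ((k:ℝ)+1+2)
          - 1 / ((harmonic (k+1+2) : ℝ) - Real.eulerMascheroniConstant) := by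
      rw [show (k+1:ℕ)+2 = k+1+2 from rfl, hHsum (k+1+2)]
      push_cast
      ring_nf
    rw [goalrw]
    exact le_trans hub.le key2
end

section
/- Suppose f is defined on an unbounded subset X of ℂ, {a_n} and {b_n} are sequences of complex numbers with a_n ≠ 0, and w_n(z) denotes the n-th approximant of the Jacobi continued fraction a_1/(z+b_1 − a_2/(z+b_2 − a_3/(z+b_3 − ⋯))). If f(z) − w_n(z) = O(1/z^{2n+1}) (z → ∞ in X) for a given n, then w_n(z) is the unique rational function w(z) ∈ ℂ(z) of degree at most n such that f(z) − w(z) = O(1/z^{2n+1}) (z → ∞ in X). -/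
open Filter Asymptotics Polynomial Bornology

/-- The `n`-th approximant of the Jacobi continued fraction
`a 1 / (z + b 1 - a 2 / (z + b 2 - a 3 / (z + b 3 - ⋯)))`. -/
noncomputable def jacobiApprox : (ℕ → ℂ) → (ℕ → ℂ) → ℕ → ℂ → ℂ
  | _, _, 0, _ => 0
  | a, b, n + 1, z =>
      a 1 / (z + b 1 - jacobiApprox (fun k => a (k + 1)) (fun k => b (k + 1)) n z)

open Topology

lemma ev_ne_zero {r : Polynomial ℂ} (hr : r ≠ 0) :
    ∀ᶠ z in cobounded ℂ, r.eval z ≠ 0 := by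
  have h1 : ∀ᶠ z in cofinite, r.eval z ≠ 0 :=
    (Polynomial.finite_setOf_isRoot hr).compl_mem_cofinite
  refine h1.filter_mono ?_
  rw [Metric.cobounded_eq_cocompact]
  exact Filter.cocompact_le_cofinite

lemma poly_isBigO {p : Polynomial ℂ} {m : ℕ} (h : p.degree ≤ m) :
    (fun z => p.eval z) =O[cobounded ℂ] fun z => z ^ m := by
  by_cases hp : p = 0
  · simp [hp, Asymptotics.isBigO_zero]
  have hnd : p.natDegree ≤ m := Polynomial.natDegree_le_iff_degree_le.2 h
  have he : ∀ z : ℂ, p.eval z = ∑ i ∈ Finset.range (m + 1), p.coeff i * z ^ i := fun z =>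
    Polynomial.eval_eq_sum_range' (Nat.lt_succ_of_le hnd) z
  simp only [he]
  refine Asymptotics.IsBigO.fun_sum fun i hi => ?_
  have him : i ≤ m := Nat.lt_succ_iff.mp (Finset.mem_range.mp hi)
  have h1 : (fun z : ℂ => z ^ i) =O[cobounded ℂ] fun z => z ^ m := by
    refine Asymptotics.IsBigO.of_bound 1 ?_
    filter_upwards [eventually_cobounded_le_norm (1 : ℝ)] with z hz
    simp only [norm_pow, one_mul]
    exact pow_le_pow_right₀ hz him
  simpa using (Asymptotics.isBigO_const_const (p.coeff i) one_ne_zero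
    (cobounded ℂ)).mul h1 |>.congr (fun z => rfl) (fun z => one_mul _)

lemma one_isBigO_poly {p : Polynomial ℂ} (hp : p ≠ 0) :
    (fun _ : ℂ => (1 : ℂ)) =O[cobounded ℂ] fun z => p.eval z := by
  by_cases hd : 0 < p.degree
  · have ht : Tendsto (fun z : ℂ => ‖p.eval z‖) (cobounded ℂ) atTop :=
      p.tendsto_norm_atTop hd tendsto_norm_cobounded_atTop
    refine Asymptotics.IsBigO.of_bound 1 ?_
    filter_upwards [ht.eventually_ge_atTop 1] with z hz
    simpa using hz
  · have h0 : p.degree = 0 := le_antisymm (not_lt.mp hd) (Polynomial.zero_le_degree_iff.2 hp)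
    have hpc : p = C (p.coeff 0) := Polynomial.eq_C_of_degree_le_zero h0.le
    have hc' : p.coeff 0 ≠ 0 := fun h => hp (by rw [hpc, h, map_zero])
    rw [hpc]
    simpa using Asymptotics.isBigO_const_const (1 : ℂ) hc' (cobounded ℂ)

lemma jacobiApprox_eq_ratio (n : ℕ) : ∀ a b : ℕ → ℂ,
    ∃ P Q : Polynomial ℂ, Q.Monic ∧ Q.degree = (n : ℕ) ∧ P.degree < (n : ℕ) ∧
      ∀ᶠ z in cobounded ℂ, jacobiApprox a b n z = P.eval z / Q.eval z := by
  induction n with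
  | zero =>
    intro a b
    refine ⟨0, 1, monic_one, Polynomial.degree_one, ?_, ?_⟩
    · simp
    · filter_upwards with z; simp [jacobiApprox]
  | succ n ih =>
    intro a b
    obtain ⟨P', Q', hQm, hQd, hPd, hE⟩ := ih (fun k => a (k + 1)) (fun k => b (k + 1))
    set Q : Polynomial ℂ := (X + C (b 1)) * Q' - P' with hQdef
    have hmul : ((X + C (b 1)) * Q').Monic := (monic_X_add_C (b 1)).mul hQm
    have hmd : ((X + C (b 1)) * Q').degree = ((n + 1 : ℕ) : WithBot ℕ) := by
      rw [Polynomial.degree_mul, Polynomial.degree_X_add_C, hQd]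
      push_cast; ring
    have hlt : (-P').degree < ((X + C (b 1)) * Q').degree := by
      rw [Polynomial.degree_neg, hmd]
      exact hPd.trans_le (by exact_mod_cast Nat.cast_le.2 (Nat.le_succ n))
    have hQmonic : Q.Monic := by
      have h := hmul.add_of_left hlt
      simpa [hQdef, sub_eq_add_neg] using h
    have hQdeg : Q.degree = ((n + 1 : ℕ) : WithBot ℕ) := by
      have h := Polynomial.degree_add_eq_left_of_degree_lt hlt
      rw [hmd] at h
      simpa [hQdef, sub_eq_add_neg] using h
    refine ⟨C (a 1) * Q', Q, hQmonic, hQdeg, ?_, ?_⟩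
    · calc (C (a 1) * Q').degree ≤ (C (a 1)).degree + Q'.degree :=
          Polynomial.degree_mul_le _ _
        _ ≤ 0 + (n : ℕ) := add_le_add Polynomial.degree_C_le (le_of_eq hQd)
        _ < ((n + 1 : ℕ) : WithBot ℕ) := by
          rw [zero_add]; exact_mod_cast Nat.cast_lt.2 (Nat.lt_succ_self n)
    · filter_upwards [hE, ev_ne_zero hQm.ne_zero] with z hz hQ'z
      show a 1 / (z + b 1 - jacobiApprox (fun k => a (k + 1)) (fun k => b (k + 1)) n z) = _
      rw [hz]
      have h1 : z + b 1 - P'.eval z / Q'.eval z = Q.eval z / Q'.eval z := by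
        field_simp [hQdef]
        rw [hQdef]; simp
      rw [h1, div_div_eq_mul_div]
      simp [mul_comm]

theorem jacobi_approximant_best_rational (a b : ℕ → ℂ) (ha : ∀ n, a n ≠ 0)
    (X : Set ℂ) (hX : (cobounded ℂ ⊓ 𝓟 X).NeBot) (f : ℂ → ℂ) (n : ℕ)
    (hO : (fun z => f z - jacobiApprox a b n z) =O[cobounded ℂ ⊓ 𝓟 X]
      (fun z => 1 / z ^ (2 * n + 1))) :
    ∀ p q : Polynomial ℂ, q ≠ 0 → p.degree ≤ n → q.degree ≤ n →
      (fun z => f z - p.eval z / q.eval z) =O[cobounded ℂ ⊓ 𝓟 X]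
        (fun z => 1 / z ^ (2 * n + 1)) →
      ∀ᶠ z in cobounded ℂ, p.eval z / q.eval z = jacobiApprox a b n z := by
  intro p q hq hpd hqd hO'
  obtain ⟨P, Q, hQm, hQd, hPd, hE⟩ := jacobiApprox_eq_ratio n a b
  set l := cobounded ℂ ⊓ 𝓟 X with hl
  have hle : l ≤ cobounded ℂ := inf_le_left
  have hQ0 : Q ≠ 0 := hQm.ne_zero
  have h1 : (fun z => f z - P.eval z / Q.eval z) =O[l] fun z => 1 / z ^ (2 * n + 1) := by
    refine hO.congr' ?_ (EventuallyEq.refl _ _)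
    filter_upwards [hE.filter_mono hle] with z hz
    rw [hz]
  have h2 : (fun z => p.eval z / q.eval z - P.eval z / Q.eval z) =O[l]
      fun z => 1 / z ^ (2 * n + 1) := by
    have h := h1.sub hO'
    exact h.congr_left fun z => by ring
  set N : Polynomial ℂ := p * Q - P * q with hN
  set D : Polynomial ℂ := q * Q with hD
  have hD0 : D ≠ 0 := mul_ne_zero hq hQ0
  have hDdeg : D.degree ≤ (2 * n : ℕ) := by
    rw [hD, Polynomial.degree_mul, hQd]
    calc q.degree + (n : ℕ) ≤ (n : ℕ) + (n : ℕ) := add_le_add_left hqd _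
      _ = ((2 * n : ℕ) : WithBot ℕ) := by push_cast; ring
  have hevq : ∀ᶠ z in cobounded ℂ, q.eval z ≠ 0 := ev_ne_zero hq
  have hevQ : ∀ᶠ z in cobounded ℂ, Q.eval z ≠ 0 := ev_ne_zero hQ0
  have h3 : (fun z => N.eval z / D.eval z) =O[l] fun z => 1 / z ^ (2 * n + 1) := by
    refine h2.congr' ?_ (EventuallyEq.refl _ _)
    filter_upwards [hevq.filter_mono hle, hevQ.filter_mono hle] with z hqz hQz
    rw [div_sub_div _ _ hqz hQz]
    simp only [hN, hD, Polynomial.eval_sub, Polynomial.eval_mul]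
    ring_nf
  have h4 : (fun z => N.eval z) =O[l] fun z => 1 / z ^ (2 * n + 1) * z ^ (2 * n) := by
    have hm := h3.mul ((poly_isBigO hDdeg).mono hle)
    refine hm.congr' ?_ (EventuallyEq.refl _ _)
    filter_upwards [hevq.filter_mono hle, hevQ.filter_mono hle] with z hqz hQz
    have hDz : D.eval z ≠ 0 := by simp [hD, hqz, hQz]
    field_simp
  have h5 : (fun z => N.eval z) =O[l] fun z => 1 / z := by
    refine h4.trans (Asymptotics.IsBigO.of_bound 1 ?_)
    filter_upwards [(eventually_cobounded_le_norm (1 : ℝ)).filter_mono hle] with z hz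
    have hz0 : z ≠ 0 := by rintro rfl; simp at hz; linarith
    have heq : (1 : ℂ) / z ^ (2 * n + 1) * z ^ (2 * n) = 1 / z := by
      rw [pow_succ]; field_simp
    rw [heq, one_mul]
  have hNzero : N = 0 := by
    by_contra hN0
    have hbig : (fun _ : ℂ => (1 : ℂ)) =O[l] fun z => 1 / z :=
      ((one_isBigO_poly hN0).mono hle).trans h5
    have htend : Tendsto (fun z : ℂ => 1 / z) l (nhds 0) := by
      simpa [one_div] using (tendsto_inv₀_cobounded (α := ℂ)).mono_left hle
    have h6 := hbig.trans_tendsto htend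
    exact one_ne_zero (tendsto_nhds_unique tendsto_const_nhds h6)
  have hpq : p * Q = P * q := sub_eq_zero.mp hNzero
  filter_upwards [hevq, hevQ, hE] with z hqz hQz hz
  rw [hz, div_eq_div_iff hqz hQz]
  have h7 := congrArg (Polynomial.eval z) hpq
  simpa [mul_comm, mul_left_comm, mul_assoc] using h7
end
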